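/- arXiv:math/0609100 — 5 statements merged into one kernel-verified Lean document; each statement's English description precedes it below -/
import Mathlib

section
/- Let G = (V, E) be an undirected graph and H ⊆ V a subset whose induced subgraph is decomposable (chordal) and connected. Then Σ_C (-1)^{|C|-1} = 1, where the sum ranges over all nonempty complete (clique) subsets C of H in G. -/
open Finset
open scoped Classical

/-- A graph is chordal (decomposable) if every cycle of length at least 4 has a
chord, i.e. an edge of the graph joining two vertices of the cycle which is not
an edge of the cycle. -/
def IsChordal {V : Type*} (G : SimpleGraph V) : Prop :=
  ∀ ⦃v : V⦄ (w : G.Walk v v), w.IsCycle → 4 ≤ w.length →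
    ∃ a b, a ∈ w.support ∧ b ∈ w.support ∧ G.Adj a b ∧ s(a, b) ∉ w.edges

open SimpleGraph

namespace ChordalAux


variable {W : Type*} {Γ : SimpleGraph W}

lemma exists_shorter_of_chord {x y : W} (p : Γ.Walk x y) (hp : p.IsPath) :
    ∀ {a b : W}, a ∈ p.support → b ∈ p.support → Γ.Adj a b → s(a, b) ∉ p.edges →
      ∃ q : Γ.Walk x y, q.length < p.length := by
  induction p with
  | nil =>
    intro a b ha hb hab _
    simp only [Walk.support_nil, List.mem_singleton] at ha hb
    subst ha; subst hb
    exact absurd hab (Γ.irrefl)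
  | @cons x w y h p' ih =>
    intro a b ha hb hab hne
    rw [Walk.support_cons, List.mem_cons] at ha hb
    have key : ∀ a : W, a ∈ p'.support → Γ.Adj x a → s(x, a) ∉ (Walk.cons h p').edges →
        ∃ q : Γ.Walk x y, q.length < (Walk.cons h p').length := by
      intro a hap hxa hne'
      refine ⟨Walk.cons hxa (p'.dropUntil a hap), ?_⟩
      have hsum := congrArg Walk.length (p'.take_spec hap)
      rw [Walk.length_append] at hsum
      have htake : 1 ≤ (p'.takeUntil a hap).length := by
        rcases Nat.eq_zero_or_pos (p'.takeUntil a hap).length with hl | hl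
        · exfalso
          have hwa : w = a := Walk.eq_of_length_eq_zero hl
          subst hwa
          exact hne' (by rw [Walk.edges_cons]; exact List.mem_cons_self)
        · exact hl
      simp only [Walk.length_cons]
      omega
    rcases ha with rfl | hap
    · rcases hb with rfl | hbp
      · exact absurd hab (Γ.irrefl)
      · exact key b hbp hab hne
    · rcases hb with rfl | hbp
      · exact key a hap hab.symm (by rwa [Sym2.eq_swap])
      · have hp' : p'.IsPath := ((Walk.cons_isPath_iff h p').mp hp).1
        obtain ⟨q, hq⟩ := ih hp' hap hbp hab
          (fun hm => hne (by rw [Walk.edges_cons]; exact List.mem_cons_of_mem _ hm))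
        exact ⟨Walk.cons h q, by simpa using Nat.succ_lt_succ hq⟩

variable {V : Type*} [Fintype V] [DecidableEq V] {G : SimpleGraph V}

def incHom (G : SimpleGraph V) {s t : Set V} (hst : s ⊆ t) : G.induce s →g G.induce t :=
  induceHom Hom.id (fun a ha => hst ha)

lemma incHom_injective {s t : Set V} (hst : s ⊆ t) :
    Function.Injective (incHom G hst) :=
  induceHom_injective _ _ (Set.injOn_id _)

lemma isChordal_mono {s t : Set V} (hst : s ⊆ t) (h : IsChordal (G.induce t)) :
    IsChordal (G.induce s) := by
  intro v w hc hl
  obtain ⟨a, b, ha, hb, hab, hne⟩ := h (w.map (incHom G hst))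
    (hc.map (incHom_injective hst)) (by rwa [Walk.length_map])
  rw [Walk.support_map, List.mem_map] at ha hb
  obtain ⟨a', ha', rfl⟩ := ha
  obtain ⟨b', hb', rfl⟩ := hb
  refine ⟨a', b', ha', hb', hab, fun hm => hne ?_⟩
  rw [Walk.edges_map]
  exact List.mem_map_of_mem hm

/-- In a chordal graph, two neighbors of `v` that are connected avoiding `v`
are connected within the neighborhood of `v`. -/
lemma reach_nbhd (s : Finset V) (v : V) (hvs : v ∈ s)
    (hch : IsChordal (G.induce (↑s : Set V))) :
    ∀ n : ℕ, ∀ x y : V, ∀ (_ : G.Adj v x) (_ : G.Adj v y) (_ : x ∈ s) (_ : y ∈ s)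
      (hxe : x ∈ (↑(s.erase v) : Set V)) (hye : y ∈ (↑(s.erase v) : Set V))
      (hxN : x ∈ (↑(s.filter (fun u => G.Adj v u)) : Set V))
      (hyN : y ∈ (↑(s.filter (fun u => G.Adj v u)) : Set V))
      (p : (G.induce (↑(s.erase v) : Set V)).Walk ⟨x, hxe⟩ ⟨y, hye⟩),
      p.length ≤ n →
      (G.induce (↑(s.filter (fun u => G.Adj v u)) : Set V)).Reachable ⟨x, hxN⟩ ⟨y, hyN⟩ := by
  intro n
  induction n using Nat.strong_induction_on with
  | _ n ih =>
  intro x y hvx hvy hxs hys hxe hye hxN hyN p hlen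
  by_cases hxy : x = y
  · subst hxy
    exact Reachable.refl _
  -- replace p by a path
  set q := p.bypass with hqdef
  have hq : q.IsPath := p.bypass_isPath
  have hql : q.length ≤ n := le_trans (p.length_bypass_le) hlen
  rcases Nat.lt_or_ge q.length 2 with hlt | hge
  · -- length 0 or 1
    interval_cases hqlen : q.length
    · exact absurd (congrArg Subtype.val (Walk.eq_of_length_eq_zero hqlen)) hxy
    · have hadj := Walk.adj_of_length_eq_one hqlen
      have : G.Adj x y := hadj
      exact (SimpleGraph.Adj.reachable (show (G.induce (↑(s.filter (fun u => G.Adj v u)) : Set V)).Adj ⟨x, hxN⟩ ⟨y, hyN⟩ from this))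
  -- main case: build a cycle through v
  · have hers : (↑(s.erase v) : Set V) ⊆ (↑s : Set V) := by
      intro z hz; simp only [Finset.coe_erase, Set.mem_diff] at hz; exact hz.1
    set f := incHom G hers with hfdef
    have hxs' : x ∈ (↑s : Set V) := by simpa using hxs
    have hys' : y ∈ (↑s : Set V) := by simpa using hys
    have hvs' : v ∈ (↑s : Set V) := by simpa using hvs
    set p₃ : (G.induce (↑s : Set V)).Walk ⟨x, hxs'⟩ ⟨y, hys'⟩ := q.map f with hp3def
    set v' : (↑s : Set V) := ⟨v, hvs'⟩ with hv'def
    have hvx' : (G.induce (↑s : Set V)).Adj v' ⟨x, hxs'⟩ := hvx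
    have hyv' : (G.induce (↑s : Set V)).Adj ⟨y, hys'⟩ v' := hvy.symm
    have hvnot : v' ∉ p₃.support := by
      intro hmem
      replace hmem : v' ∈ (q.map f).support := hmem
      rw [Walk.support_map, List.mem_map] at hmem
      obtain ⟨u, -, hu⟩ := hmem
      have : (u : V) = v := congrArg Subtype.val hu
      have hu2 := u.2
      rw [this] at hu2
      simp at hu2
    have hpath₃ : p₃.IsPath := Walk.map_isPath_of_injective (incHom_injective hers) (by exact hq)
    have hcpath : (p₃.concat hyv').IsPath := by
      rw [← Walk.isPath_reverse_iff, Walk.reverse_concat, Walk.cons_isPath_iff]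
      refine ⟨hpath₃.reverse, ?_⟩
      rw [Walk.support_reverse, List.mem_reverse]
      exact hvnot
    have hno : s(v', (⟨x, hxs'⟩ : (↑s : Set V))) ∉ (p₃.concat hyv').edges := by
      intro hmem
      rw [Walk.edges_concat, List.concat_eq_append, List.mem_append, List.mem_singleton] at hmem
      rcases hmem with hmem | hmem
      · exact hvnot (Walk.fst_mem_support_of_mem_edges _ hmem)
      · rw [Sym2.eq_iff] at hmem
        rcases hmem with ⟨h1, h2⟩ | ⟨-, h2⟩
        · have : x = v := congrArg Subtype.val h2
          subst this
          exact absurd hvx (G.irrefl)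
        · exact hxy (congrArg Subtype.val h2)
    set c := Walk.cons hvx' (p₃.concat hyv') with hcdef
    have hcyc : c.IsCycle := by
      rw [hcdef, Walk.cons_isCycle_iff]
      exact ⟨hcpath, hno⟩
    have hclen : 4 ≤ c.length := by
      have h1 : p₃.length = q.length := Walk.length_map _ _
      rw [hcdef, Walk.length_cons, Walk.length_concat]
      omega
    obtain ⟨a, b, ha, hb, hab, hnab⟩ := hch c hcyc hclen
    have hsupp : ∀ z, z ∈ c.support → z = v' ∨ z ∈ p₃.support := by
      intro z hz
      rw [hcdef, Walk.support_cons, List.mem_cons] at hz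
      rcases hz with rfl | hz
      · exact Or.inl rfl
      · rw [Walk.support_concat, List.mem_append, List.mem_singleton] at hz
        tauto
    have hfirst : s(v', (⟨x, hxs'⟩ : (↑s : Set V))) ∈ c.edges := by
      rw [hcdef, Walk.edges_cons]; exact List.mem_cons_self
    have hlast : s(v', (⟨y, hys'⟩ : (↑s : Set V))) ∈ c.edges := by
      rw [hcdef, Walk.edges_cons]
      apply List.mem_cons_of_mem
      rw [Walk.edges_concat, List.concat_eq_append, List.mem_append, List.mem_singleton]
      exact Or.inr (Sym2.eq_swap)
    have hcase1 : ∀ b' : (↑s : Set V), b' ∈ p₃.support → (G.induce (↑s : Set V)).Adj v' b' →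
        s(v', b') ∉ c.edges →
        (G.induce (↑(s.filter (fun u => G.Adj v u)) : Set V)).Reachable ⟨x, hxN⟩ ⟨y, hyN⟩ := by
      intro b' hbsupp hadj hnotedge
      replace hbsupp : b' ∈ (q.map f).support := hbsupp
      rw [Walk.support_map, List.mem_map] at hbsupp
      obtain ⟨u, hu, hfu⟩ := hbsupp
      have hzval : (b' : V) = (u : V) := (congrArg Subtype.val hfu).symm
      set z := (u : V) with hzdef
      have hue : z ∈ (↑(s.erase v) : Set V) := u.2
      have hzs : z ∈ s := by
        have := u.2; simp only [Finset.coe_erase, Set.mem_diff, Finset.mem_coe] at this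
        exact this.1
      have hvz : G.Adj v z := by
        have : G.Adj (v' : V) (b' : V) := hadj
        rwa [hzval] at this
      have hzN : z ∈ (↑(s.filter (fun u => G.Adj v u)) : Set V) := by
        simp only [Finset.coe_filter, Set.mem_setOf_eq]
        exact ⟨hzs, hvz⟩
      have hzx : z ≠ x := by
        intro hzx
        apply hnotedge
        have : b' = (⟨x, hxs'⟩ : (↑s : Set V)) := Subtype.ext (by rw [hzval, hzx])
        rw [this]
        exact hfirst
      have hzy : z ≠ y := by
        intro hzy
        apply hnotedge
        have : b' = (⟨y, hys'⟩ : (↑s : Set V)) := Subtype.ext (by rw [hzval, hzy])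
        rw [this]
        exact hlast
      have hu' : u = (⟨z, hue⟩ : (↑(s.erase v) : Set V)) := Subtype.ext rfl
      have ht1 : (q.takeUntil u hu).length + (q.dropUntil u hu).length = q.length := by
        have := congrArg Walk.length (q.take_spec hu)
        rwa [Walk.length_append] at this
      have htk1 : 1 ≤ (q.takeUntil u hu).length := by
        rcases Nat.eq_zero_or_pos (q.takeUntil u hu).length with h0 | h0
        · exact absurd (congrArg Subtype.val (Walk.eq_of_length_eq_zero h0)) (by simpa using hzx.symm)
        · exact h0
      have htk2 : 1 ≤ (q.dropUntil u hu).length := by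
        rcases Nat.eq_zero_or_pos (q.dropUntil u hu).length with h0 | h0
        · exact absurd (congrArg Subtype.val (Walk.eq_of_length_eq_zero h0)) (by simpa using hzy)
        · exact h0
      have r₁ := ih (q.takeUntil u hu).length (by omega) x z hvx hvz hxs hzs hxe hue hxN hzN
        (hu' ▸ q.takeUntil u hu) (le_refl _)
      have r₂ := ih (q.dropUntil u hu).length (by omega) z y hvz hvy hzs hys hue hye hzN hyN
        (hu' ▸ q.dropUntil u hu) (le_refl _)
      exact r₁.trans r₂
    rcases hsupp a ha with rfl | hain
    · rcases hsupp b hb with rfl | hbin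
      · exact absurd hab (SimpleGraph.irrefl _)
      · exact hcase1 b hbin hab hnab
    · rcases hsupp b hb with rfl | hbin
      · exact hcase1 a hain hab.symm (by rwa [Sym2.eq_swap] at hnab)
      · replace hain : a ∈ (q.map f).support := hain
        replace hbin : b ∈ (q.map f).support := hbin
        rw [Walk.support_map, List.mem_map] at hain hbin
        obtain ⟨a₀, ha₀, rfl⟩ := hain
        obtain ⟨b₀, hb₀, rfl⟩ := hbin
        have hadj₀ : (G.induce (↑(s.erase v) : Set V)).Adj a₀ b₀ := hab
        have hnot₀ : s(a₀, b₀) ∉ q.edges := by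
          intro hmem
          apply hnab
          rw [hcdef, Walk.edges_cons]
          apply List.mem_cons_of_mem
          rw [Walk.edges_concat, List.concat_eq_append, List.mem_append]
          left
          show _ ∈ (q.map f).edges
          rw [Walk.edges_map]
          exact List.mem_map_of_mem hmem
        obtain ⟨q', hq'⟩ := exists_shorter_of_chord q hq ha₀ hb₀ hadj₀ hnot₀
        exact ih q'.length (by omega) x y hvx hvy hxs hys hxe hye hxN hyN q' (le_refl _)



variable {V : Type*} [Fintype V] [DecidableEq V] {G : SimpleGraph V}

lemma reachable_of_walk_subset {s t : Set V} {x y : s}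
    (p : (G.induce s).Walk x y) (hsupp : ∀ u ∈ p.support, (u : V) ∈ t)
    (hx : (x : V) ∈ t) (hy : (y : V) ∈ t) :
    (G.induce t).Reachable ⟨x, hx⟩ ⟨y, hy⟩ := by
  induction p with
  | nil => exact Reachable.refl _
  | @cons a b c h p ih =>
    have hb : (b : V) ∈ t := hsupp b (by rw [Walk.support_cons]; exact List.mem_cons_of_mem _ p.start_mem_support)
    have hadj : (G.induce t).Adj ⟨a, hx⟩ ⟨b, hb⟩ := h
    exact (hadj.reachable).trans (ih (fun u hu => hsupp u (by rw [Walk.support_cons]; exact List.mem_cons_of_mem _ hu)) hb hy)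

/-- Every finite connected graph on `≥ 2` vertices (given as an induced subgraph on a finset)
has a non-cut vertex. -/
lemma exists_noncut {s : Finset V} (hconn : (G.induce (↑s : Set V)).Connected)
    (h2 : 2 ≤ s.card) :
    ∃ v ∈ s, (G.induce (↑(s.erase v) : Set V)).Connected := by
  haveI : Nonempty (↑s : Set V) := hconn.nonempty
  set Γ := G.induce (↑s : Set V) with hΓ
  obtain ⟨u⟩ := ‹Nonempty (↑s : Set V)›
  obtain ⟨v, -, hmax⟩ := Finset.exists_max_image Finset.univ (fun a => Γ.dist u a) ⟨u, Finset.mem_univ u⟩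
  have hmax : ∀ a : (↑s : Set V), Γ.dist u a ≤ Γ.dist u v := fun a => hmax a (Finset.mem_univ a)
  -- v ≠ u since there is a vertex at positive distance
  have huv : u ≠ v := by
    obtain ⟨w, hwmem, hwne⟩ : ∃ w ∈ s, w ≠ (u : V) := by
      have : ({(u : V)} : Finset V) ⊂ s := by
        rw [Finset.ssubset_iff_of_subset (by simpa using u.2)]
        · obtain ⟨w, hw, hw'⟩ := Finset.exists_mem_ne h2 (u : V)
          exact ⟨w, hw, by simpa using hw'⟩
      obtain ⟨w, hw, hw'⟩ := Finset.exists_of_ssubset this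
      exact ⟨w, hw, by simpa using hw'⟩
    have hw : (⟨w, by simpa using hwmem⟩ : (↑s : Set V)) ≠ u := by
      intro hh; exact hwne (congrArg Subtype.val hh)
    have hpos : 0 < Γ.dist u ⟨w, by simpa using hwmem⟩ :=
      (hconn.preconnected u _).pos_dist_of_ne (Ne.symm hw)
    intro h; subst h
    have hle := hmax ⟨w, by simpa using hwmem⟩
    rw [SimpleGraph.dist_self] at hle
    omega
  refine ⟨(v : V), by simpa using v.2, ?_⟩
  have hvne : ∀ x : (↑s : Set V), x ≠ v → ((x : V) ∈ (↑(s.erase (v : V)) : Set V)) := by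
    intro x hx
    simp only [Finset.coe_erase, Set.mem_diff, Set.mem_singleton_iff]
    exact ⟨by simpa using x.2, fun hh => hx (Subtype.ext hh)⟩
  -- For each x ≠ v, a shortest walk from u to x avoids v
  have key : ∀ x : (↑s : Set V), x ≠ v → ∃ p : Γ.Walk u x, ∀ z ∈ p.support, z ≠ v := by
    intro x hx
    obtain ⟨p, hp⟩ := (hconn.preconnected u x).exists_walk_length_eq_dist
    refine ⟨p, fun z hz hzv => ?_⟩
    subst hzv
    have h1 : Γ.dist u z ≤ (p.takeUntil z hz).length := SimpleGraph.dist_le _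
    have h2 : 1 ≤ (p.dropUntil z hz).length := by
      rcases Nat.eq_zero_or_pos (p.dropUntil z hz).length with h0 | h0
      · exact absurd (Walk.eq_of_length_eq_zero h0) hx.symm
      · exact h0
    have hsum := congrArg Walk.length (p.take_spec hz)
    rw [Walk.length_append] at hsum
    have hle := hmax x
    omega
  haveI hne' : Nonempty (↑(s.erase (v : V)) : Set V) := ⟨⟨(u : V), hvne u huv⟩⟩
  refine ⟨fun a b => ?_⟩
  · 
    have ha : (a : V) ∈ s := by
      have := a.2; simp only [Finset.coe_erase, Set.mem_diff] at this; simpa using this.1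
    have hb : (b : V) ∈ s := by
      have := b.2; simp only [Finset.coe_erase, Set.mem_diff] at this; simpa using this.1
    have hav : (⟨(a:V), by simpa using ha⟩ : (↑s : Set V)) ≠ v := by
      intro hh
      have := a.2; simp only [Finset.coe_erase, Set.mem_diff, Set.mem_singleton_iff] at this
      exact this.2 (congrArg Subtype.val hh)
    have hbv : (⟨(b:V), by simpa using hb⟩ : (↑s : Set V)) ≠ v := by
      intro hh
      have := b.2; simp only [Finset.coe_erase, Set.mem_diff, Set.mem_singleton_iff] at this
      exact this.2 (congrArg Subtype.val hh)
    obtain ⟨pa, hpa⟩ := key _ hav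
    obtain ⟨pb, hpb⟩ := key _ hbv
    have ra : (G.induce (↑(s.erase (v:V)) : Set V)).Reachable
        ⟨(u : V), hvne u huv⟩ ⟨(a : V), a.2⟩ := by
      have := reachable_of_walk_subset (t := (↑(s.erase (v:V)) : Set V)) pa
        (fun z hz => hvne z (hpa z hz)) (hvne u huv) (hvne _ hav)
      exact this
    have rb : (G.induce (↑(s.erase (v:V)) : Set V)).Reachable
        ⟨(u : V), hvne u huv⟩ ⟨(b : V), b.2⟩ := by
      have := reachable_of_walk_subset (t := (↑(s.erase (v:V)) : Set V)) pb
        (fun z hz => hvne z (hpb z hz)) (hvne u huv) (hvne _ hbv)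
      exact this
    exact ra.symm.trans rb



variable {V : Type*} [Fintype V] [DecidableEq V] (G : SimpleGraph V)

noncomputable def cliqueSum (s : Finset V) : ℤ :=
  ∑ C ∈ s.powerset.filter (fun C : Finset V => C.Nonempty ∧ G.IsClique (↑C : Set V)),
    (-1 : ℤ) ^ (C.card - 1)

variable {G}

lemma cliqueSum_split {s : Finset V} {v : V} (hv : v ∈ s) :
    cliqueSum G s =
      cliqueSum G (s.erase v) + 1 - cliqueSum G (s.filter (fun u => G.Adj v u)) := by
  classical
  set P : Finset V → Prop := fun C => C.Nonempty ∧ G.IsClique (↑C : Set V) with hP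
  set N := s.filter (fun u => G.Adj v u) with hN
  have hvN : v ∉ N := by simp [hN]
  have hsplit := Finset.sum_filter_add_sum_filter_not
    (s.powerset.filter P) (fun C => v ∈ C) (fun C => (-1 : ℤ) ^ (C.card - 1))
  have h2 : (s.powerset.filter P).filter (fun C => v ∉ C)
      = (s.erase v).powerset.filter P := by
    ext C
    simp only [Finset.mem_filter, Finset.mem_powerset, Finset.subset_erase]
    tauto
  have h1 : ∑ C ∈ (s.powerset.filter P).filter (fun C => v ∈ C), (-1 : ℤ) ^ (C.card - 1)
      = ∑ S ∈ N.powerset.filter (fun S : Finset V => G.IsClique (↑S : Set V)), (-1 : ℤ) ^ S.card := by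
    refine Finset.sum_bij' (fun C _ => C.erase v) (fun S _ => insert v S) ?_ ?_ ?_ ?_ ?_
    · intro C hC
      simp only [Finset.mem_filter, Finset.mem_powerset] at hC ⊢
      obtain ⟨⟨hCs, -, hclq⟩, hvC⟩ := hC
      constructor
      · intro u hu
        rw [Finset.mem_erase] at hu
        rw [hN, Finset.mem_filter]
        exact ⟨hCs hu.2, hclq (by simpa using hvC) (by simpa using hu.2) (Ne.symm hu.1)⟩
      · exact hclq.subset (by simp [Finset.coe_erase, Set.diff_subset])
    · intro S hS
      simp only [Finset.mem_filter, Finset.mem_powerset] at hS ⊢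
      obtain ⟨hSN, hclq⟩ := hS
      refine ⟨⟨?_, ⟨v, Finset.mem_insert_self _ _⟩, ?_⟩, Finset.mem_insert_self _ _⟩
      · intro u hu
        rcases Finset.mem_insert.mp hu with rfl | hu
        · exact hv
        · exact Finset.mem_of_mem_filter u (hN ▸ hSN hu)
      · rw [Finset.coe_insert]
        refine hclq.insert (fun b hb _ => ?_)
        have := hSN (by simpa using hb)
        rw [hN, Finset.mem_filter] at this
        exact this.2
    · intro C hC
      simp only [Finset.mem_filter] at hC
      exact Finset.insert_erase hC.2
    · intro S hS
      simp only [Finset.mem_filter, Finset.mem_powerset] at hS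
      exact Finset.erase_insert (fun hvS => hvN (hS.1 hvS))
    · intro C hC
      simp only [Finset.mem_filter] at hC
      rw [Finset.card_erase_of_mem hC.2]
  have h3 : ∑ S ∈ N.powerset.filter (fun S : Finset V => G.IsClique (↑S : Set V)), (-1 : ℤ) ^ S.card
      = 1 - cliqueSum G N := by
    have hmem : (∅ : Finset V) ∈ N.powerset.filter (fun S : Finset V => G.IsClique (↑S : Set V)) := by
      simp [SimpleGraph.isClique_empty]
    rw [← Finset.sum_erase_add _ _ hmem]
    have he : (N.powerset.filter (fun S : Finset V => G.IsClique (↑S : Set V))).erase ∅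
        = N.powerset.filter P := by
      ext S
      simp only [Finset.mem_erase, Finset.mem_filter, Finset.mem_powerset, hP,
        Finset.nonempty_iff_ne_empty]
      tauto
    rw [he]
    have hsum : ∑ S ∈ N.powerset.filter P, (-1 : ℤ) ^ S.card
        = - cliqueSum G N := by
      rw [cliqueSum, ← Finset.sum_neg_distrib]
      refine Finset.sum_congr rfl (fun S hS => ?_)
      simp only [Finset.mem_filter, hP] at hS
      have hc : 1 ≤ S.card := Finset.card_pos.mpr hS.2.1
      obtain ⟨k, hk⟩ : ∃ k, S.card = k + 1 := ⟨S.card - 1, by omega⟩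
      rw [hk]
      simp [pow_succ]
    rw [hsum]
    simp only [Finset.card_empty, pow_zero]
    ring
  rw [cliqueSum, ← hsplit, h2, h1, h3]
  have : ∑ C ∈ Finset.filter P (s.erase v).powerset, (-1 : ℤ) ^ (C.card - 1)
      = cliqueSum G (s.erase v) := rfl
  rw [this]
  ring


variable {V : Type*} [Fintype V] [DecidableEq V] {G : SimpleGraph V}

lemma cliqueSum_singleton (w : V) : cliqueSum G {w} = 1 := by
  classical
  rw [cliqueSum]
  have h : ({w} : Finset V).powerset.filter
      (fun C : Finset V => C.Nonempty ∧ G.IsClique (↑C : Set V)) = {{w}} := by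
    ext C
    simp only [Finset.mem_filter, Finset.mem_powerset, Finset.subset_singleton_iff,
      Finset.mem_singleton]
    constructor
    · rintro ⟨rfl | rfl, hne, -⟩
      · exact absurd hne (by simp)
      · rfl
    · rintro rfl
      exact ⟨Or.inr rfl, Finset.singleton_nonempty w, by simp [SimpleGraph.isClique_singleton]⟩
  rw [h, Finset.sum_singleton, Finset.card_singleton]
  norm_num

lemma main_induction : ∀ n : ℕ, ∀ s : Finset V, s.card ≤ n →
    IsChordal (G.induce (↑s : Set V)) → (G.induce (↑s : Set V)).Connected →
    cliqueSum G s = 1 := by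
  intro n
  induction n with
  | zero =>
    intro s hcard _ hconn
    exfalso
    obtain ⟨⟨z, hz⟩⟩ := hconn.nonempty
    have hs0 : s = ∅ := Finset.card_eq_zero.mp (Nat.le_zero.mp hcard)
    subst hs0
    simpa using hz
  | succ n ihn =>
    intro s hcard hch hconn
    rcases Nat.lt_or_ge s.card 2 with hlt | h2
    · -- card 0 or 1
      interval_cases hc : s.card
      · exfalso
        obtain ⟨⟨z, hz⟩⟩ := hconn.nonempty
        rw [Finset.card_eq_zero] at hc
        subst hc
        simpa using hz
      · obtain ⟨w, rfl⟩ := Finset.card_eq_one.mp hc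
        exact cliqueSum_singleton w
    · obtain ⟨v, hv, hconn'⟩ := exists_noncut hconn h2
      set N := s.filter (fun u => G.Adj v u) with hNdef
      have hNsub : N ⊆ s.erase v := by
        intro u hu
        rw [hNdef, Finset.mem_filter] at hu
        exact Finset.mem_erase.mpr ⟨(hu.2).ne', hu.1⟩
      have hNe : N.Nonempty := by
        obtain ⟨w, hw, hwv⟩ := Finset.exists_mem_ne h2 v
        have hvs' : v ∈ (↑s : Set V) := by simpa using hv
        have hws' : w ∈ (↑s : Set V) := by simpa using hw
        obtain ⟨p⟩ := hconn.preconnected ⟨v, hvs'⟩ ⟨w, hws'⟩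
        cases p with
        | nil => exact absurd rfl hwv
        | @cons _ b _ h q =>
          have hadj : G.Adj v (b : V) := h
          refine ⟨(b : V), ?_⟩
          rw [hNdef, Finset.mem_filter]
          exact ⟨by simpa using b.2, hadj⟩
      have hNsub' : (↑N : Set V) ⊆ (↑s : Set V) := by
        intro z hz
        simp only [Finset.mem_coe] at hz ⊢
        exact Finset.mem_of_mem_filter z (hNdef ▸ hz)
      have hesub' : (↑(s.erase v) : Set V) ⊆ (↑s : Set V) := by
        intro z hz
        simp only [Finset.mem_coe] at hz ⊢
        exact Finset.mem_of_mem_erase hz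
      have hNchordal : IsChordal (G.induce (↑N : Set V)) := isChordal_mono hNsub' hch
      have herase_chordal : IsChordal (G.induce (↑(s.erase v) : Set V)) :=
        isChordal_mono hesub' hch
      have hNconn : (G.induce (↑N : Set V)).Connected := by
        obtain ⟨w0, hw0⟩ := hNe
        haveI : Nonempty (↑N : Set V) := ⟨⟨w0, by simpa using hw0⟩⟩
        refine ⟨fun a b => ?_⟩
        have haN : (a : V) ∈ N := by simpa using a.2
        have hbN : (b : V) ∈ N := by simpa using b.2
        have haN' : (a : V) ∈ s ∧ G.Adj v (a : V) := Finset.mem_filter.mp haN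
        have hbN' : (b : V) ∈ s ∧ G.Adj v (b : V) := Finset.mem_filter.mp hbN
        have hae : (a : V) ∈ (↑(s.erase v) : Set V) := Finset.mem_coe.mpr (hNsub haN)
        have hbe : (b : V) ∈ (↑(s.erase v) : Set V) := Finset.mem_coe.mpr (hNsub hbN)
        obtain ⟨p⟩ := hconn'.preconnected ⟨(a : V), hae⟩ ⟨(b : V), hbe⟩
        have := reach_nbhd s v hv hch p.length (a : V) (b : V) haN'.2 hbN'.2 haN'.1 hbN'.1
          hae hbe (Finset.mem_coe.mpr haN) (Finset.mem_coe.mpr hbN) p (le_refl _)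
        exact this
      have hcard_erase : (s.erase v).card ≤ n := by
        rw [Finset.card_erase_of_mem hv]
        omega
      have hcardN : N.card ≤ n :=
        le_trans (Finset.card_le_card hNsub) hcard_erase
      rw [cliqueSum_split hv, ihn _ hcard_erase herase_chordal hconn',
        ihn _ hcardN hNchordal hNconn]
      norm_num

end ChordalAux

/-- If the subgraph induced by `H` is decomposable (chordal) and connected, then
the alternating sum over nonempty complete subsets `C` of `H` of `(-1)^{|C|-1}`
equals `1`. -/
theorem alternating_sum_cliques_chordal_connected
    (V : Type) [Fintype V] [DecidableEq V] (G : SimpleGraph V)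
    (H : Finset V)
    (hchordal : IsChordal (G.induce (↑H : Set V)))
    (hconn : (G.induce (↑H : Set V)).Connected) :
    ∑ C ∈ H.powerset.filter (fun C : Finset V => C.Nonempty ∧ G.IsClique (↑C : Set V)),
      (-1 : ℤ) ^ (C.card - 1) = 1 :=
  ChordalAux.main_induction H.card H le_rfl hchordal hconn
end

section
/- Let G = (V, E) be an undirected graph and H ⊆ V a subset whose induced subgraph is decomposable (chordal) but not connected, with all connected components decomposable. Then Σ_C (-1)^{|C|-1} = k, where the sum ranges over all nonempty complete subsets C of H and k is the number of connected components of the induced subgraph on H; in particular this sum is not equal to 1 when k ≥ 2. -/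
open Finset
open scoped Classical
set_option linter.unusedSectionVars false
set_option linter.unusedVariables false


namespace AltSumAux
variable {V : Type} [Fintype V] [DecidableEq V] (G : SimpleGraph V)

/-- reachable within `A` -/
noncomputable def reach (A : Finset V) (x y : V) : Prop :=
  ∃ w : G.Walk x y, ∀ z ∈ w.support, z ∈ A

variable {G}

lemma reach.mem_left {A : Finset V} {x y : V} (h : reach G A x y) : x ∈ A := by
  obtain ⟨w, hw⟩ := h; exact hw _ w.start_mem_support

lemma reach.mem_right {A : Finset V} {x y : V} (h : reach G A x y) : y ∈ A := by
  obtain ⟨w, hw⟩ := h; exact hw _ w.end_mem_support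

lemma reach_refl {A : Finset V} {x : V} (hx : x ∈ A) : reach G A x x :=
  ⟨SimpleGraph.Walk.nil, by simpa using hx⟩

lemma reach.symm {A : Finset V} {x y : V} (h : reach G A x y) : reach G A y x := by
  obtain ⟨w, hw⟩ := h
  exact ⟨w.reverse, by simpa using hw⟩

lemma reach.trans {A : Finset V} {x y z : V} (h : reach G A x y) (h' : reach G A y z) :
    reach G A x z := by
  obtain ⟨w, hw⟩ := h; obtain ⟨w', hw'⟩ := h'
  refine ⟨w.append w', ?_⟩
  intro u hu
  rw [SimpleGraph.Walk.mem_support_append_iff] at hu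
  rcases hu with hu | hu
  · exact hw _ hu
  · exact hw' _ hu

lemma reach.mono {A B : Finset V} (hAB : A ⊆ B) {x y : V} (h : reach G A x y) :
    reach G B x y := by
  obtain ⟨w, hw⟩ := h; exact ⟨w, fun z hz => hAB (hw z hz)⟩

variable (G)

/-- the connected component of `x` within `A`, as a finset -/
noncomputable def comp (A : Finset V) (x : V) : Finset V := A.filter (reach G A x)

noncomputable def ncomp (A : Finset V) : ℕ := (A.image (comp G A)).card

noncomputable def cliques (A : Finset V) : Finset (Finset V) :=
  A.powerset.filter (fun C : Finset V => C.Nonempty ∧ G.IsClique (↑C : Set V))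

noncomputable def fsum (A : Finset V) : ℤ := ∑ C ∈ cliques G A, (-1 : ℤ) ^ (C.card - 1)

variable {G}

lemma mem_comp {A : Finset V} {x y : V} : y ∈ comp G A x ↔ y ∈ A ∧ reach G A x y := by
  simp [comp]

lemma mem_comp_self {A : Finset V} {x : V} (hx : x ∈ A) : x ∈ comp G A x :=
  mem_comp.2 ⟨hx, reach_refl hx⟩

lemma comp_eq_comp {A : Finset V} {x y : V} (h : reach G A x y) :
    comp G A x = comp G A y := by
  ext z
  simp only [mem_comp]
  exact ⟨fun ⟨hz, hr⟩ => ⟨hz, h.symm.trans hr⟩, fun ⟨hz, hr⟩ => ⟨hz, h.trans hr⟩⟩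

lemma comp_eq_comp_iff {A : Finset V} {x y : V} (hx : x ∈ A) (hy : y ∈ A) :
    comp G A x = comp G A y ↔ reach G A x y := by
  refine ⟨fun h => ?_, comp_eq_comp⟩
  have : y ∈ comp G A x := h ▸ mem_comp_self hy
  exact (mem_comp.1 this).2

lemma comp_subset {A : Finset V} {x : V} : comp G A x ⊆ A := Finset.filter_subset _ _

/-- helper: images under two "class functions" with equal fibers have equal card -/
lemma card_image_eq_card_image {α β γ : Type*} [DecidableEq α] [DecidableEq β] [DecidableEq γ]
    (s : Finset α) (f : α → β) (g : α → γ)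
    (h : ∀ x ∈ s, ∀ y ∈ s, (f x = f y ↔ g x = g y)) :
    (s.image f).card = (s.image g).card := by
  induction s using Finset.induction_on with
  | empty => simp
  | @insert a s ha ih =>
    rw [Finset.image_insert, Finset.image_insert]
    have hmem : f a ∈ s.image f ↔ g a ∈ s.image g := by
      simp only [Finset.mem_image]
      constructor
      · rintro ⟨x, hx, hfx⟩
        exact ⟨x, hx, ((h x (by simp [hx]) a (by simp)).1 hfx)⟩
      · rintro ⟨x, hx, hgx⟩
        exact ⟨x, hx, ((h x (by simp [hx]) a (by simp)).2 hgx)⟩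
    have ih' := ih (fun x hx y hy => h x (by simp [hx]) y (by simp [hy]))
    by_cases hf : f a ∈ s.image f
    · rw [Finset.insert_eq_self.2 hf, Finset.insert_eq_self.2 (hmem.1 hf), ih']
    · rw [Finset.card_insert_of_notMem hf, Finset.card_insert_of_notMem (fun hg => hf (hmem.2 hg)), ih']



/-- lift a walk of `G` whose support lies in `s` to a walk of `G.induce s` -/
def liftWalk {s : Set V} : ∀ {x y : V} (w : G.Walk x y)
    (h : ∀ z ∈ w.support, z ∈ s) (hx : x ∈ s) (hy : y ∈ s),
    (G.induce s).Walk ⟨x, hx⟩ ⟨y, hy⟩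
  | x, _, SimpleGraph.Walk.nil, _, hx, hy => SimpleGraph.Walk.nil
  | x, y, @SimpleGraph.Walk.cons _ _ _ c _ hadj p, h, hx, hy =>
    SimpleGraph.Walk.cons
      (by simpa using hadj : (G.induce s).Adj ⟨x, hx⟩ ⟨c, h c (by simp)⟩)
      (liftWalk p (fun z hz => h z (by simp [hz])) _ hy)

lemma map_liftWalk {s : Set V} {x y : V} (w : G.Walk x y)
    (h : ∀ z ∈ w.support, z ∈ s) (hx : x ∈ s) (hy : y ∈ s) :
    (liftWalk w h hx hy).map (SimpleGraph.Embedding.induce s).toHom = w := by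
  induction w with
  | nil => simp [liftWalk]
  | cons hadj p ih =>
    simp only [liftWalk, SimpleGraph.Walk.map_cons, ih]
    rfl


lemma edge_mem_of_length_eq_one {x y : V} (w : G.Walk x y) (h : w.length = 1) :
    s(x, y) ∈ w.edges := by
  cases w with
  | nil => simp at h
  | cons hadj p =>
    have hp : p.length = 0 := by simpa using h
    have := SimpleGraph.Walk.eq_of_length_eq_zero hp
    subst this
    simp

lemma exists_ordered_split {x y a b : V} (w : G.Walk x y)
    (ha : a ∈ w.support) (hb : b ∈ w.support) :
    (∃ (q : G.Walk x a) (r : G.Walk a y), w = q.append r ∧ b ∈ r.support) ∨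
    (∃ (q : G.Walk x b) (r : G.Walk b y), w = q.append r ∧ a ∈ r.support) := by
  induction w with
  | nil =>
    simp only [SimpleGraph.Walk.support_nil, List.mem_singleton] at ha hb
    subst ha; subst hb
    exact Or.inl ⟨SimpleGraph.Walk.nil, SimpleGraph.Walk.nil, rfl, by simp⟩
  | @cons x c y hadj p ih =>
    by_cases hax : x = a
    · subst hax
      exact Or.inl ⟨SimpleGraph.Walk.nil, SimpleGraph.Walk.cons hadj p, rfl, hb⟩
    · by_cases hbx : x = b
      · subst hbx
        exact Or.inr ⟨SimpleGraph.Walk.nil, SimpleGraph.Walk.cons hadj p, rfl, ha⟩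
      · have ha' : a ∈ p.support := by
          rw [SimpleGraph.Walk.support_cons, List.mem_cons] at ha
          rcases ha with h | h
          · exact absurd h.symm hax
          · exact h
        have hb' : b ∈ p.support := by
          rw [SimpleGraph.Walk.support_cons, List.mem_cons] at hb
          rcases hb with h | h
          · exact absurd h.symm hbx
          · exact h
        rcases ih ha' hb' with ⟨q, r, hqr, hm⟩ | ⟨q, r, hqr, hm⟩
        · exact Or.inl ⟨SimpleGraph.Walk.cons hadj q, r, by rw [hqr]; rfl, hm⟩
        · exact Or.inr ⟨SimpleGraph.Walk.cons hadj q, r, by rw [hqr]; rfl, hm⟩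

lemma shortcut_ordered {x y a b : V} (q : G.Walk x a) (r : G.Walk a y)
    (hadj : G.Adj a b) (hbr : b ∈ r.support) (he : s(a, b) ∉ r.edges) :
    ∃ w' : G.Walk x y,
      (∀ z ∈ w'.support, z ∈ (q.append r).support) ∧ w'.length < (q.append r).length := by
  refine ⟨q.append (SimpleGraph.Walk.cons hadj (r.dropUntil b hbr)), ?_, ?_⟩
  · intro z hz
    rw [SimpleGraph.Walk.mem_support_append_iff] at hz ⊢
    rcases hz with hz | hz
    · exact Or.inl hz
    · rw [SimpleGraph.Walk.support_cons, List.mem_cons] at hz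
      rcases hz with hz | hz
      · subst hz; exact Or.inr r.start_mem_support
      · exact Or.inr (r.support_dropUntil_subset hbr hz)
  · have hsplit : (r.takeUntil b hbr).length + (r.dropUntil b hbr).length = r.length := by
      have h := congr_arg SimpleGraph.Walk.length (r.take_spec hbr)
      rwa [SimpleGraph.Walk.length_append] at h
    have h2 : 2 ≤ (r.takeUntil b hbr).length := by
      rcases Nat.lt_or_ge (r.takeUntil b hbr).length 2 with hlt | hge
      · interval_cases h : (r.takeUntil b hbr).length
        · exact absurd (SimpleGraph.Walk.eq_of_length_eq_zero h) hadj.ne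
        · exact absurd (r.edges_takeUntil_subset hbr (edge_mem_of_length_eq_one _ h)) he
      · exact hge
    simp only [SimpleGraph.Walk.length_append, SimpleGraph.Walk.length_cons]
    omega

lemma shortcut {x y a b : V} (w : G.Walk x y) (hadj : G.Adj a b)
    (ha : a ∈ w.support) (hb : b ∈ w.support) (he : s(a, b) ∉ w.edges) :
    ∃ w' : G.Walk x y, (∀ z ∈ w'.support, z ∈ w.support) ∧ w'.length < w.length := by
  rcases exists_ordered_split w ha hb with ⟨q, r, hqr, hm⟩ | ⟨q, r, hqr, hm⟩
  · subst hqr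
    refine shortcut_ordered q r hadj hm (fun h => he ?_)
    rw [SimpleGraph.Walk.edges_append, List.mem_append]
    exact Or.inr h
  · subst hqr
    have he' : s(b, a) ∉ r.edges := by
      rw [Sym2.eq_swap]
      intro h
      exact he (by
        rw [SimpleGraph.Walk.edges_append, List.mem_append]
        exact Or.inr h)
    exact shortcut_ordered q r hadj.symm hm he'

lemma isPath_concat {x y v : V} {p : G.Walk x y} (hp : p.IsPath) (h : G.Adj y v)
    (hv : v ∉ p.support) : (p.concat h).IsPath := by
  rw [SimpleGraph.Walk.isPath_def, SimpleGraph.Walk.support_concat]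
  simp only [List.concat_eq_append, List.nodup_append, List.nodup_cons, List.nodup_nil,
    List.mem_singleton]
  refine ⟨hp.support_nodup, by simp, ?_⟩
  intro z hz hzv
  intro hzv'
  subst hzv'
  exact fun h => hv (h ▸ hz)

/-- The key chordality consequence: if `x, y` are neighbours of `v` (inside `A.erase v`) that
are connected within `A.erase v`, then they are connected within the neighbourhood of `v`. -/
lemma chord_aux {H A : Finset V} (hchordal : IsChordal (G.induce (↑H : Set V)))
    (hAH : A ⊆ H) {v : V} (hv : v ∈ A) :
    ∀ n : ℕ, ∀ x y : V, x ∈ (A.erase v).filter (G.Adj v) → y ∈ (A.erase v).filter (G.Adj v) →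
      ∀ w : G.Walk x y, w.length ≤ n → (∀ z ∈ w.support, z ∈ A.erase v) →
      reach G ((A.erase v).filter (G.Adj v)) x y := by
  set B := A.erase v with hB
  set N := (A.erase v).filter (G.Adj v) with hN
  have hNB : N ⊆ B := Finset.filter_subset _ _
  have hBA : B ⊆ A := Finset.erase_subset _ _
  have hvH : v ∈ (↑H : Set V) := hAH hv
  intro n
  induction n using Nat.strong_induction_on with
  | _ n ih =>
  intro x y hx hy w hwn hwB
  have hxB : x ∈ B := hNB hx
  have hyB : y ∈ B := hNB hy
  have hvx : G.Adj v x := (Finset.mem_filter.1 hx).2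
  have hvy : G.Adj v y := (Finset.mem_filter.1 hy).2
  by_cases hxy : x = y
  · subst hxy; exact reach_refl hx
  by_cases hadj : G.Adj x y
  · exact ⟨SimpleGraph.Walk.cons hadj SimpleGraph.Walk.nil, by
      intro z hz
      simp only [SimpleGraph.Walk.support_cons, SimpleGraph.Walk.support_nil,
        List.mem_cons, List.mem_singleton] at hz
      rcases hz with rfl | rfl | h
      · exact hx
      · exact hy
      · simp at h⟩
  -- pass to a path
  set p := w.bypass with hp
  have hpath : p.IsPath := w.bypass_isPath
  have hpB : ∀ z ∈ p.support, z ∈ B := fun z hz => hwB z (w.support_bypass_subset hz)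
  have hplen : p.length ≤ w.length := w.length_bypass_le
  have hp2 : 2 ≤ p.length := by
    rcases Nat.lt_or_ge p.length 2 with hlt | hge
    · interval_cases hl : p.length
      · exact absurd (SimpleGraph.Walk.eq_of_length_eq_zero hl) hxy
      · exact absurd (SimpleGraph.Walk.adj_of_length_eq_one hl) hadj
    · exact hge
  have hvp : v ∉ p.support := fun h => by simpa [hB] using hpB v h
  -- the cycle through v
  set q : G.Walk x v := p.concat hvy.symm with hq
  set cyc : G.Walk v v := SimpleGraph.Walk.cons hvx q with hcycdef
  have hqpath : q.IsPath := isPath_concat hpath hvy.symm hvp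
  have hsvx : s(v, x) ∉ q.edges := by
    rw [hq, SimpleGraph.Walk.edges_concat]
    simp only [List.concat_eq_append, List.mem_append, List.mem_singleton]
    rintro (h | h)
    · exact hvp (p.fst_mem_support_of_mem_edges h)
    · rw [Sym2.eq_iff] at h
      rcases h with ⟨h1, h2⟩ | ⟨h1, h2⟩
      · exact (Finset.mem_erase.1 hyB).1 h1.symm
      · exact hxy h2
  have hcyc : cyc.IsCycle := (SimpleGraph.Walk.cons_isCycle_iff q hvx).2 ⟨hqpath, hsvx⟩
  have hcycsupp : cyc.support = v :: (p.support ++ [v]) := by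
    rw [hcycdef, SimpleGraph.Walk.support_cons, hq, SimpleGraph.Walk.support_concat]
  have hcycedges : cyc.edges = s(v, x) :: (p.edges ++ [s(y, v)]) := by
    rw [hcycdef, SimpleGraph.Walk.edges_cons, hq, SimpleGraph.Walk.edges_concat]
    simp
  have hcycH : ∀ z ∈ cyc.support, z ∈ (↑H : Set V) := by
    intro z hz
    rw [hcycsupp] at hz
    simp only [List.mem_cons, List.mem_append, List.mem_singleton, List.not_mem_nil, or_false] at hz
    rcases hz with rfl | hz | rfl
    · exact hvH
    · exact Finset.mem_coe.2 (hAH (hBA (hpB z hz)))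
    · exact hvH
  set cyc' := liftWalk cyc hcycH hvH hvH with hcyc'
  have hmap : cyc'.map (SimpleGraph.Embedding.induce (↑H : Set V)).toHom = cyc :=
    map_liftWalk _ _ _ _
  have hinj : Function.Injective
      (SimpleGraph.Embedding.induce (↑H : Set V) : G.induce (↑H : Set V) ↪g G).toHom :=
    Subtype.val_injective
  have hcyc'c : cyc'.IsCycle := by
    rw [← SimpleGraph.Walk.map_isCycle_iff_of_injective hinj, hmap]
    exact hcyc
  have hcyc'len : 4 ≤ cyc'.length := by
    have : cyc'.length = cyc.length := by rw [← hmap]; exact (SimpleGraph.Walk.length_map _ _).symm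
    rw [this, hcycdef, SimpleGraph.Walk.length_cons, hq, SimpleGraph.Walk.length_concat]
    omega
  obtain ⟨a, b, hasup, hbsup, hab, habedge⟩ := hchordal cyc' hcyc'c hcyc'len
  have hGab : G.Adj ↑a ↑b := hab
  have hedge : s((a : V), (b : V)) ∉ cyc.edges := by
    intro h
    rw [← hmap] at h
    replace h : s((a : V), (b : V)) ∈ cyc'.edges.map (Sym2.map (SimpleGraph.Embedding.induce (G := G) (↑H : Set V)).toHom) := by
      rw [← SimpleGraph.Walk.edges_map]; exact h
    obtain ⟨e, he, hemap⟩ := List.mem_map.1 h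
    have : e = s(a, b) := by
      apply Sym2.map.injective hinj
      rw [hemap]
      rfl
    exact habedge (this ▸ he)
  have hasup' : (a : V) ∈ cyc.support := by
    rw [← hmap]
    have h' : (a : V) ∈ cyc'.support.map (SimpleGraph.Embedding.induce (G := G) (↑H : Set V)).toHom :=
      List.mem_map.2 ⟨a, hasup, rfl⟩
    rw [← SimpleGraph.Walk.support_map] at h'
    exact h'
  have hbsup' : (b : V) ∈ cyc.support := by
    rw [← hmap]
    have h' : (b : V) ∈ cyc'.support.map (SimpleGraph.Embedding.induce (G := G) (↑H : Set V)).toHom :=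
      List.mem_map.2 ⟨b, hbsup, rfl⟩
    rw [← SimpleGraph.Walk.support_map] at h'
    exact h'
  -- the key case analysis
  have key : ∀ c d : V, G.Adj c d → c ∈ cyc.support → d ∈ cyc.support →
      s(c, d) ∉ cyc.edges → c = v → reach G N x y := by
    intro c d hcd hcs hds hcde hcv
    rw [hcv] at hcd hcde
    have hdv : d ≠ v := fun h => (h ▸ hcd).ne rfl
    have hdp : d ∈ p.support := by
      rw [hcycsupp] at hds
      simp only [List.mem_cons, List.mem_append, List.mem_singleton, List.not_mem_nil, or_false] at hds
      rcases hds with rfl | hds | rfl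
      · exact absurd rfl hdv
      · exact hds
      · exact absurd rfl hdv
    have hdN : d ∈ N := Finset.mem_filter.2 ⟨hpB d hdp, hcd⟩
    have hdx : d ≠ x := by
      rintro rfl
      exact hcde (by rw [hcycedges]; exact List.mem_cons_self)
    have hdy : d ≠ y := by
      rintro rfl
      refine hcde ?_
      rw [hcycedges]
      have : s(v, d) = s(d, v) := Sym2.eq_swap
      rw [this]
      simp
    -- split p at d
    have ht : (p.takeUntil d hdp).length + (p.dropUntil d hdp).length = p.length := by
      have h := congr_arg SimpleGraph.Walk.length (p.take_spec hdp)
      rwa [SimpleGraph.Walk.length_append] at h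
    have ht1 : 1 ≤ (p.takeUntil d hdp).length := by
      rcases Nat.eq_zero_or_pos (p.takeUntil d hdp).length with h | h
      · exact absurd (SimpleGraph.Walk.eq_of_length_eq_zero h) (Ne.symm hdx)
      · exact h
    have hd1 : 1 ≤ (p.dropUntil d hdp).length := by
      rcases Nat.eq_zero_or_pos (p.dropUntil d hdp).length with h | h
      · exact absurd (SimpleGraph.Walk.eq_of_length_eq_zero h) hdy
      · exact h
    have r1 : reach G N x d := by
      refine ih (p.takeUntil d hdp).length ?_ x d hx hdN (p.takeUntil d hdp) le_rfl
        (fun z hz => hpB z (p.support_takeUntil_subset hdp hz))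
      omega
    have r2 : reach G N d y := by
      refine ih (p.dropUntil d hdp).length ?_ d y hdN hy (p.dropUntil d hdp) le_rfl
        (fun z hz => hpB z (p.support_dropUntil_subset hdp hz))
      omega
    exact r1.trans r2
  by_cases hav : (a : V) = v
  · exact key a b hGab hasup' hbsup' hedge hav
  by_cases hbv : (b : V) = v
  · refine key b a hGab.symm hbsup' hasup' ?_ hbv
    rw [Sym2.eq_swap]
    exact hedge
  -- both on p: shortcut
  have hap : (a : V) ∈ p.support := by
    rw [hcycsupp] at hasup'
    simp only [List.mem_cons, List.mem_append, List.mem_singleton, List.not_mem_nil, or_false] at hasup'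
    rcases hasup' with h | h | h
    · exact absurd h hav
    · exact h
    · exact absurd h hav
  have hbp : (b : V) ∈ p.support := by
    rw [hcycsupp] at hbsup'
    simp only [List.mem_cons, List.mem_append, List.mem_singleton, List.not_mem_nil, or_false] at hbsup'
    rcases hbsup' with h | h | h
    · exact absurd h hbv
    · exact h
    · exact absurd h hbv
  have hpe : s((a : V), (b : V)) ∉ p.edges := by
    intro h
    exact hedge (by rw [hcycedges]; simp [h])
  obtain ⟨w', hw's, hw'len⟩ := shortcut p hGab hap hbp hpe
  refine ih w'.length ?_ x y hx hy w' le_rfl (fun z hz => hpB z (hw's z hz))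
  omega

lemma chord_reach {H A : Finset V} (hchordal : IsChordal (G.induce (↑H : Set V)))
    (hAH : A ⊆ H) {v : V} (hv : v ∈ A) {x y : V}
    (hx : x ∈ (A.erase v).filter (G.Adj v)) (hy : y ∈ (A.erase v).filter (G.Adj v))
    (h : reach G (A.erase v) x y) : reach G ((A.erase v).filter (G.Adj v)) x y := by
  obtain ⟨w, hw⟩ := h
  exact chord_aux hchordal hAH hv w.length x y hx hy w le_rfl hw

lemma exists_nbr {A : Finset V} {v x : V} (hx : x ∈ A.erase v)
    (h : reach G A x v) : ∃ y ∈ (A.erase v).filter (G.Adj v), reach G (A.erase v) x y := by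
  obtain ⟨w, hw⟩ := h
  have hvs : v ∈ w.support := w.end_mem_support
  set t := w.takeUntil v hvs with hti
  have hcount : t.support.count v = 1 := w.count_support_takeUntil_eq_one hvs
  have htsub : ∀ z ∈ t.support, z ∈ A := fun z hz => hw z (w.support_takeUntil_subset hvs hz)
  cases hr : t.reverse with
  | nil =>
    exact ((Finset.mem_erase.1 hx).1 rfl).elim
  | cons hadj p =>
    rename_i c
    have hsupr : t.reverse.support = v :: p.support := by rw [hr]; simp
    have hcount' : (v :: p.support).count v = 1 := by
      rw [← hsupr, SimpleGraph.Walk.support_reverse, List.count_reverse]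
      exact hcount
    have hvp : v ∉ p.support := by
      rw [List.count_cons_self] at hcount'
      have : p.support.count v = 0 := by omega
      exact List.count_eq_zero.1 this
    have hpsub : ∀ z ∈ p.support, z ∈ A.erase v := by
      intro z hz
      refine Finset.mem_erase.2 ⟨fun hzv => hvp (hzv ▸ hz), ?_⟩
      have : z ∈ t.reverse.support := by rw [hsupr]; simp [hz]
      rw [SimpleGraph.Walk.support_reverse, List.mem_reverse] at this
      exact htsub z this
    have hcB : c ∈ A.erase v := hpsub c p.start_mem_support
    refine ⟨c, Finset.mem_filter.2 ⟨hcB, hadj⟩, ⟨p.reverse, ?_⟩⟩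
    intro z hz
    rw [SimpleGraph.Walk.support_reverse, List.mem_reverse] at hz
    exact hpsub z hz

lemma ncomp_identity {H A : Finset V} (hchordal : IsChordal (G.induce (↑H : Set V)))
    (hAH : A ⊆ H) {v : V} (hv : v ∈ A) :
    ncomp G A + ncomp G ((A.erase v).filter (G.Adj v)) = ncomp G (A.erase v) + 1 := by
  set B := A.erase v with hB
  set N := B.filter (G.Adj v) with hN
  have hNB : N ⊆ B := Finset.filter_subset _ _
  have hBA : B ⊆ A := Finset.erase_subset _ _
  set S0 : Finset (Finset V) := (B.filter (fun x => ¬ reach G A x v)).image (comp G B) with hS0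
  set S1 : Finset (Finset V) := N.image (comp G B) with hS1
  have claim1 : ∀ x ∈ B, ¬ reach G A x v → comp G A x = comp G B x := by
    intro x hxB hnr
    ext z
    simp only [mem_comp]
    constructor
    · rintro ⟨hzA, w, hw⟩
      have hvw : v ∉ w.support := by
        intro hvw
        exact hnr ⟨w.takeUntil v hvw, fun u hu => hw u (w.support_takeUntil_subset hvw hu)⟩
      have hsub : ∀ u ∈ w.support, u ∈ B :=
        fun u hu => Finset.mem_erase.2 ⟨fun h => hvw (h ▸ hu), hw u hu⟩
      exact ⟨hsub z w.end_mem_support, ⟨w, hsub⟩⟩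
    · rintro ⟨hzB, hr⟩
      exact ⟨hBA hzB, hr.mono hBA⟩
  have claim4 : ∀ x ∈ B, ¬ reach G A x v → ∀ y ∈ N, comp G B x ≠ comp G B y := by
    intro x hxB hnr y hyN heq
    have hyB : y ∈ B := hNB hyN
    have hrB : reach G B x y := (comp_eq_comp_iff hxB hyB).1 heq
    have hvy : G.Adj v y := (Finset.mem_filter.1 hyN).2
    refine hnr ((hrB.mono hBA).trans ⟨SimpleGraph.Walk.cons hvy.symm SimpleGraph.Walk.nil, ?_⟩)
    intro z hz
    simp only [SimpleGraph.Walk.support_cons, SimpleGraph.Walk.support_nil, List.mem_cons,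
      List.mem_singleton, List.not_mem_nil, or_false] at hz
    rcases hz with rfl | rfl
    · exact hBA hyB
    · exact hv
  have hca : ncomp G A = S0.card + 1 := by
    have himg : A.image (comp G A) = insert (comp G A v) S0 := by
      ext c
      simp only [Finset.mem_image, Finset.mem_insert]
      constructor
      · rintro ⟨x, hxA, rfl⟩
        by_cases hr : reach G A x v
        · exact Or.inl (comp_eq_comp hr)
        · have hxv : x ≠ v := fun h => hr (by rw [h]; exact reach_refl hv)
          have hxB : x ∈ B := Finset.mem_erase.2 ⟨hxv, hxA⟩
          refine Or.inr ?_
          rw [hS0]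
          exact Finset.mem_image.2 ⟨x, Finset.mem_filter.2 ⟨hxB, hr⟩, (claim1 x hxB hr).symm⟩
      · rintro (rfl | hc)
        · exact ⟨v, hv, rfl⟩
        · rw [hS0] at hc
          obtain ⟨x, hx, rfl⟩ := Finset.mem_image.1 hc
          obtain ⟨hxB, hnr⟩ := Finset.mem_filter.1 hx
          exact ⟨x, hBA hxB, claim1 x hxB hnr⟩
    have hnotmem : comp G A v ∉ S0 := by
      intro hmem
      rw [hS0] at hmem
      obtain ⟨x, hx, heq⟩ := Finset.mem_image.1 hmem
      have : v ∈ comp G B x := heq ▸ mem_comp_self hv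
      have : v ∈ B := comp_subset this
      exact (Finset.mem_erase.1 this).1 rfl
    rw [ncomp, himg, Finset.card_insert_of_notMem hnotmem]
  have hcb : ncomp G B = S0.card + S1.card := by
    have himg : B.image (comp G B) = S0 ∪ S1 := by
      ext c
      simp only [Finset.mem_image, Finset.mem_union]
      constructor
      · rintro ⟨x, hxB, rfl⟩
        by_cases hr : reach G A x v
        · obtain ⟨y, hyN, hrB⟩ := exists_nbr hxB hr
          refine Or.inr ?_
          rw [hS1]
          exact Finset.mem_image.2 ⟨y, hyN, (comp_eq_comp hrB).symm⟩
        · refine Or.inl ?_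
          rw [hS0]
          exact Finset.mem_image.2 ⟨x, Finset.mem_filter.2 ⟨hxB, hr⟩, rfl⟩
      · rintro (hc | hc)
        · rw [hS0] at hc
          obtain ⟨x, hx, rfl⟩ := Finset.mem_image.1 hc
          exact ⟨x, (Finset.mem_filter.1 hx).1, rfl⟩
        · rw [hS1] at hc
          obtain ⟨x, hx, rfl⟩ := Finset.mem_image.1 hc
          exact ⟨x, hNB hx, rfl⟩
    have hdisj : Disjoint S0 S1 := by
      rw [Finset.disjoint_left]
      intro c hc0 hc1
      rw [hS0] at hc0
      rw [hS1] at hc1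
      obtain ⟨x, hx, rfl⟩ := Finset.mem_image.1 hc0
      obtain ⟨y, hy, heq⟩ := Finset.mem_image.1 hc1
      obtain ⟨hxB, hnr⟩ := Finset.mem_filter.1 hx
      exact claim4 x hxB hnr y hy heq.symm
    rw [ncomp, himg, Finset.card_union_of_disjoint hdisj]
  have hcc : ncomp G N = S1.card := by
    rw [ncomp, hS1]
    refine card_image_eq_card_image N (comp G N) (comp G B) ?_
    intro x hxN y hyN
    constructor
    · intro h
      exact comp_eq_comp (((comp_eq_comp_iff hxN hyN).1 h).mono hNB)
    · intro h
      exact comp_eq_comp (chord_reach hchordal hAH hv hxN hyN ((comp_eq_comp_iff (hNB hxN) (hNB hyN)).1 h))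
  omega

lemma fsum_identity {A : Finset V} {v : V} (hv : v ∈ A) :
    fsum G A = fsum G (A.erase v) + 1 - fsum G ((A.erase v).filter (G.Adj v)) := by
  classical
  set B := A.erase v with hB
  set N := B.filter (G.Adj v) with hN
  have hvB : v ∉ B := fun h => (Finset.mem_erase.1 h).1 rfl
  have hvN : v ∉ N := fun h => hvB (Finset.filter_subset _ _ h)
  set Ncl0 : Finset (Finset V) := N.powerset.filter (fun S => G.IsClique (↑S : Set V)) with hNcl0
  have hsplit := Finset.sum_filter_add_sum_filter_not (cliques G A) (fun C => v ∈ C)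
      (fun C => (-1 : ℤ) ^ (C.card - 1))
  have h1 : (cliques G A).filter (fun C => v ∉ C) = cliques G B := by
    ext C
    simp only [cliques, Finset.mem_filter, Finset.mem_powerset]
    constructor
    · rintro ⟨⟨hCA, hne, hcl⟩, hvC⟩
      exact ⟨Finset.subset_erase.2 ⟨hCA, hvC⟩, hne, hcl⟩
    · rintro ⟨hCB, hne, hcl⟩
      obtain ⟨h1, h2⟩ := Finset.subset_erase.1 hCB
      exact ⟨⟨h1, hne, hcl⟩, h2⟩
  have h2 : (cliques G A).filter (fun C => v ∈ C) = Ncl0.image (insert v) := by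
    ext C
    simp only [cliques, hNcl0, Finset.mem_filter, Finset.mem_powerset, Finset.mem_image]
    constructor
    · rintro ⟨⟨hCA, hne, hcl⟩, hvC⟩
      refine ⟨C.erase v, ⟨?_, ?_⟩, Finset.insert_erase hvC⟩
      · intro z hz
        obtain ⟨hzv, hzC⟩ := Finset.mem_erase.1 hz
        refine Finset.mem_filter.2 ⟨Finset.mem_erase.2 ⟨hzv, hCA hzC⟩, ?_⟩
        exact (hcl hvC hzC (Ne.symm hzv)).symm.symm
      · exact hcl.subset (by simp [Finset.erase_subset])
    · rintro ⟨S, ⟨hSN, hScl⟩, rfl⟩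
      have hSB : S ⊆ B := hSN.trans (Finset.filter_subset _ _)
      refine ⟨⟨?_, ⟨v, Finset.mem_insert_self _ _⟩, ?_⟩, Finset.mem_insert_self _ _⟩
      · intro z hz
        rcases Finset.mem_insert.1 hz with rfl | hz
        · exact hv
        · exact (Finset.erase_subset _ _) (hSB hz)
      · rw [Finset.coe_insert]
        refine SimpleGraph.IsClique.insert hScl ?_
        intro b hb hbv
        exact ((Finset.mem_filter.1 (hSN hb)).2).symm.symm
  have hinj : ∀ S ∈ Ncl0, ∀ T ∈ Ncl0, insert v S = insert v T → S = T := by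
    intro S hS T hT h
    have hvS : v ∉ S := fun hmem => hvN ((Finset.mem_powerset.1 (Finset.mem_filter.1 hS).1) hmem)
    have hvT : v ∉ T := fun hmem => hvN ((Finset.mem_powerset.1 (Finset.mem_filter.1 hT).1) hmem)
    rw [← Finset.erase_insert hvS, ← Finset.erase_insert hvT, h]
  have h3 : ∑ C ∈ Ncl0.image (insert v), (-1 : ℤ) ^ (C.card - 1)
      = ∑ S ∈ Ncl0, (-1 : ℤ) ^ S.card := by
    rw [Finset.sum_image hinj]
    refine Finset.sum_congr rfl ?_
    intro S hS
    have hvS : v ∉ S := fun hmem => hvN ((Finset.mem_powerset.1 (Finset.mem_filter.1 hS).1) hmem)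
    rw [Finset.card_insert_of_notMem hvS]
    simp
  have h4 : ∑ S ∈ Ncl0, (-1 : ℤ) ^ S.card = 1 - fsum G N := by
    have hsplit2 := Finset.sum_filter_add_sum_filter_not Ncl0 (fun S => S.Nonempty)
        (fun S => (-1 : ℤ) ^ S.card)
    have he : Ncl0.filter (fun S => ¬ S.Nonempty) = {∅} := by
      ext S
      simp only [Finset.mem_filter, Finset.mem_singleton, Finset.not_nonempty_iff_eq_empty]
      constructor
      · rintro ⟨_, h⟩; exact h
      · rintro rfl
        refine ⟨Finset.mem_filter.2 ⟨Finset.empty_mem_powerset _, ?_⟩, rfl⟩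
        simp [SimpleGraph.isClique_empty]
    have hne : Ncl0.filter (fun S => S.Nonempty) = cliques G N := by
      ext S
      simp only [hNcl0, cliques, Finset.mem_filter, Finset.mem_powerset]
      tauto
    have hterm : ∑ S ∈ cliques G N, (-1 : ℤ) ^ S.card = - fsum G N := by
      rw [fsum, ← Finset.sum_neg_distrib]
      refine Finset.sum_congr rfl ?_
      intro S hS
      have hc : 1 ≤ S.card := Finset.card_pos.2 (Finset.mem_filter.1 hS).2.1
      have h5 : S.card = (S.card - 1) + 1 := by omega
      rw [h5, pow_succ, Nat.add_sub_cancel]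
      ring
    rw [← hsplit2, hne, hterm, he]
    simp
    ring
  simp only [fsum] at h4 ⊢
  rw [← hsplit, h1, h2, h3, h4]
  ring

lemma fsum_empty : fsum G ∅ = 0 := by
  have : cliques G ∅ = ∅ := by
    ext C
    simp only [cliques, Finset.mem_filter, Finset.mem_powerset, Finset.subset_empty,
      Finset.notMem_empty, iff_false]
    rintro ⟨rfl, hne, _⟩
    exact hne.ne_empty rfl
  rw [fsum, this]
  simp

lemma ncomp_empty : ncomp G ∅ = 0 := by simp [ncomp]

lemma fsum_eq_ncomp {H : Finset V} (hchordal : IsChordal (G.induce (↑H : Set V))) :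
    ∀ (n : ℕ) (A : Finset V), A.card ≤ n → A ⊆ H → fsum G A = ncomp G A := by
  intro n
  induction n with
  | zero =>
    intro A hcard _
    have : A = ∅ := Finset.card_eq_zero.1 (Nat.le_zero.1 hcard)
    subst this
    rw [fsum_empty, ncomp_empty]
    rfl
  | succ n ih =>
    intro A hcard hAH
    rcases A.eq_empty_or_nonempty with rfl | ⟨v, hv⟩
    · rw [fsum_empty, ncomp_empty]; rfl
    · set B := A.erase v with hB
      set N := B.filter (G.Adj v) with hN
      have hBcard : B.card ≤ n := by
        rw [hB, Finset.card_erase_of_mem hv]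
        omega
      have hNcard : N.card ≤ n := le_trans (Finset.card_le_card (Finset.filter_subset _ _)) hBcard
      have hBH : B ⊆ H := (Finset.erase_subset _ _).trans hAH
      have hNH : N ⊆ H := (Finset.filter_subset _ _).trans hBH
      have hfB := ih B hBcard hBH
      have hfN := ih N hNcard hNH
      have hncomp := ncomp_identity hchordal hAH hv
      rw [fsum_identity hv, hfB, hfN]
      rw [← hB] at hncomp
      rw [← hN] at hncomp
      omega

lemma reach_iff {H : Finset V} {x y : V} (hx : x ∈ H) (hy : y ∈ H) :
    reach G H x y ↔ (G.induce (↑H : Set V)).Reachable ⟨x, hx⟩ ⟨y, hy⟩ := by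
  constructor
  · rintro ⟨w, hw⟩
    exact ⟨liftWalk w (fun z hz => Finset.mem_coe.2 (hw z hz)) hx hy⟩
  · rintro ⟨p⟩
    refine ⟨p.map (SimpleGraph.Embedding.induce (↑H : Set V) :
      G.induce (↑H : Set V) ↪g G).toHom, ?_⟩
    intro z hz
    replace hz : z ∈ (p.map (SimpleGraph.Embedding.induce (↑H : Set V) :
      G.induce (↑H : Set V) ↪g G).toHom).support := hz
    rw [SimpleGraph.Walk.support_map] at hz
    obtain ⟨u, hu, rfl⟩ := List.mem_map.1 hz
    exact Finset.mem_coe.1 u.2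

lemma ncomp_eq_natcard {H : Finset V} :
    ncomp G H = Nat.card ((G.induce (↑H : Set V)).ConnectedComponent) := by
  classical
  set f : ↥(↑H : Set V) → ↥(H.image (comp G H)) :=
    fun a => ⟨comp G H ↑a, Finset.mem_image_of_mem _ (Finset.mem_coe.1 a.2)⟩ with hf
  have hresp : ∀ a b : ↥(↑H : Set V), (G.induce (↑H : Set V)).Reachable a b → f a = f b := by
    intro a b hab
    have ha : (a : V) ∈ H := Finset.mem_coe.1 a.2
    have hb : (b : V) ∈ H := Finset.mem_coe.1 b.2
    have : reach G H ↑a ↑b := (reach_iff ha hb).2 hab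
    exact Subtype.ext (comp_eq_comp this)
  set φ : (G.induce (↑H : Set V)).ConnectedComponent → ↥(H.image (comp G H)) :=
    Quot.lift f (fun a b hab => hresp a b hab) with hφ
  have hbij : Function.Bijective φ := by
    constructor
    · intro c d
      refine SimpleGraph.ConnectedComponent.ind₂ (fun a b h => ?_) c d
      have := Subtype.ext_iff.1 h
      simp only [hφ, hf] at this
      have ha : (a : V) ∈ H := Finset.mem_coe.1 a.2
      have hb : (b : V) ∈ H := Finset.mem_coe.1 b.2
      have hr : reach G H ↑a ↑b := (comp_eq_comp_iff ha hb).1 this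
      exact SimpleGraph.ConnectedComponent.sound ((reach_iff ha hb).1 hr)
    · rintro ⟨c, hc⟩
      obtain ⟨x, hxH, rfl⟩ := Finset.mem_image.1 hc
      exact ⟨(G.induce (↑H : Set V)).connectedComponentMk ⟨x, Finset.mem_coe.2 hxH⟩, rfl⟩
  have := Nat.card_eq_of_bijective φ hbij
  rw [Nat.card_eq_finsetCard] at this
  rw [ncomp, ← this]

end AltSumAux

/-- If the subgraph induced by `H` is chordal but not connected (so each of its
connected components is decomposable), the alternating sum over nonempty
complete subsets of `H` equals the number `k` of connected components of the
induced subgraph; in particular it is not `1` when `k ≥ 2`. -/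
theorem alternating_sum_cliques_chordal_disconnected
    (V : Type) [Fintype V] [DecidableEq V] (G : SimpleGraph V)
    (H : Finset V) (hne : H.Nonempty)
    (hchordal : IsChordal (G.induce (↑H : Set V)))
    (hdisconn : ¬ (G.induce (↑H : Set V)).Connected)
    (k : ℕ) (hk : k = Nat.card ((G.induce (↑H : Set V)).ConnectedComponent)) :
    (∑ C ∈ H.powerset.filter (fun C : Finset V => C.Nonempty ∧ G.IsClique (↑C : Set V)),
      (-1 : ℤ) ^ (C.card - 1) = (k : ℤ)) ∧
    (2 ≤ k →
      ∑ C ∈ H.powerset.filter (fun C : Finset V => C.Nonempty ∧ G.IsClique (↑C : Set V)),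
        (-1 : ℤ) ^ (C.card - 1) ≠ 1) := by
  have hmain : ∑ C ∈ H.powerset.filter (fun C : Finset V => C.Nonempty ∧ G.IsClique (↑C : Set V)),
      (-1 : ℤ) ^ (C.card - 1) = (k : ℤ) := by
    have h1 : AltSumAux.fsum G H = AltSumAux.ncomp G H :=
      AltSumAux.fsum_eq_ncomp hchordal H.card H le_rfl (Finset.Subset.refl H)
    have h2 := AltSumAux.ncomp_eq_natcard (G := G) (H := H)
    have h3 : AltSumAux.fsum G H
        = ∑ C ∈ H.powerset.filter (fun C : Finset V => C.Nonempty ∧ G.IsClique (↑C : Set V)),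
          (-1 : ℤ) ^ (C.card - 1) := by
      rw [AltSumAux.fsum, AltSumAux.cliques]
    rw [← h3, h1, h2, hk]
  refine ⟨hmain, fun hk2 => ?_⟩
  rw [hmain]
  intro h
  have : k = 1 := by exact_mod_cast h
  omega
end

section
/- For binary data with decomposable generating class, the Markov factorization of cell probabilities implies the log-linear parameters decompose over prime components: if p(i) = ∏_{l=1}^k p^{C_l}(i_{C_l}) / ∏_{l=2}^k p^{S_l}(i_{S_l}) for all cells i, then for every E ⊆ V, θ_E(i_E) = Σ_{l=1}^k θ^{C_l}_E(i_{E∩C_l}) − Σ_{l=2}^k θ^{S_l}_E(i_{E∩S_l}), where θ^{C_l}_E and θ^{S_l}_E are the log-linear parameters computed from the marginal probability tables p^{C_l} and p^{S_l}, and θ^{C_l}_E = 0 whenever E ⊄ C_l (similarly for S_l). -/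
open Finset

lemma theta_cancel_aux {V : Type} [DecidableEq V] (E Cl : Finset V)
    (hE : ¬ E ⊆ Cl) (g : Finset V → ℝ) :
    ∑ F ∈ E.powerset, (-1 : ℝ) ^ ((E \ F).card) * g (F ∩ Cl) = 0 := by
  obtain ⟨x, hxE, hxC⟩ : ∃ x, x ∈ E ∧ x ∉ Cl := by
    by_contra h; push_neg at h; exact hE h
  have hxE' : x ∉ E.erase x := Finset.notMem_erase _ _
  have hEeq : E = insert x (E.erase x) := (Finset.insert_erase hxE).symm
  rw [hEeq, Finset.sum_powerset_insert hxE']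
  rw [← Finset.sum_add_distrib]
  apply Finset.sum_eq_zero
  intro F hF
  rw [Finset.mem_powerset] at hF
  have hxF : x ∉ F := fun h => hxE' (hF h)
  have hins : insert x F ∩ Cl = F ∩ Cl := by
    ext y; simp only [Finset.mem_inter, Finset.mem_insert]
    constructor
    · rintro ⟨(rfl | h), hc⟩
      · exact absurd hc hxC
      · exact ⟨h, hc⟩
    · rintro ⟨h, hc⟩; exact ⟨Or.inr h, hc⟩
  have hxmem : x ∈ insert x (E.erase x) \ F := by
    simp [hxF]
  have hcard1 : (insert x (E.erase x) \ F).card =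
      ((insert x (E.erase x) \ insert x F).card) + 1 := by
    have : insert x (E.erase x) \ insert x F =
        (insert x (E.erase x) \ F).erase x := by
      ext y
      simp only [Finset.mem_sdiff, Finset.mem_erase, Finset.mem_insert]
      tauto
    rw [this, Finset.card_erase_of_mem hxmem]
    have := Finset.card_pos.mpr ⟨x, hxmem⟩
    omega
  rw [hins, hcard1, pow_succ]
  ring


/-- For binary data, if the cell probabilities factorize over cliques
`C_1,…,C_k` and separators `S_2,…,S_k` of a decomposable graph, then the
log-linear parameters decompose as
`θ_E = ∑_l θ^{C_l}_E − ∑_{l≥2} θ^{S_l}_E`, where `θ^{A}_E` is computed from the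
`A`-marginal table, and `θ^{C_l}_E = 0` whenever `E ⊄ C_l` (similarly for
`S_l`). -/
theorem theta_decomposition_over_prime_components
    (V : Type) [Fintype V] [DecidableEq V] (k : ℕ)
    (C : Fin (k + 1) → Finset V) (S : Fin (k + 1) → Finset V)
    (p : Finset V → ℝ) (pC : Fin (k + 1) → Finset V → ℝ)
    (pS : Fin (k + 1) → Finset V → ℝ)
    (hp : ∀ E, 0 < p E) (hpC : ∀ l E, 0 < pC l E) (hpS : ∀ l E, 0 < pS l E)
    (hfact : ∀ E : Finset V,
      p E = (∏ l, pC l (E ∩ C l)) /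
        ∏ l ∈ (Finset.univ : Finset (Fin (k + 1))).erase 0, pS l (E ∩ S l))
    (θfun : (Finset V → ℝ) → Finset V → ℝ)
    (hθfun : ∀ (q : Finset V → ℝ) (F : Finset V),
      θfun q F = ∑ E ∈ F.powerset, (-1 : ℝ) ^ ((F \ E).card) * Real.log (q E)) :
    ∀ E : Finset V,
      (θfun p E =
        (∑ l, θfun (fun A => pC l (A ∩ C l)) E) -
          ∑ l ∈ (Finset.univ : Finset (Fin (k + 1))).erase 0,
            θfun (fun A => pS l (A ∩ S l)) E) ∧
      (∀ l, ¬ E ⊆ C l → θfun (fun A => pC l (A ∩ C l)) E = 0) ∧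
      (∀ l ∈ (Finset.univ : Finset (Fin (k + 1))).erase 0,
        ¬ E ⊆ S l → θfun (fun A => pS l (A ∩ S l)) E = 0) := by
  intro E
  refine ⟨?_, ?_, ?_⟩
  · rw [hθfun]
    have h1 : ∀ F ∈ E.powerset, (-1 : ℝ) ^ ((E \ F).card) * Real.log (p F) =
        (∑ l, (-1 : ℝ) ^ ((E \ F).card) * Real.log (pC l (F ∩ C l))) -
        ∑ l ∈ (Finset.univ : Finset (Fin (k + 1))).erase 0,
          (-1 : ℝ) ^ ((E \ F).card) * Real.log (pS l (F ∩ S l)) := by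
      intro F _
      rw [hfact F,
        Real.log_div (Finset.prod_pos fun l _ => hpC l _).ne' (Finset.prod_pos fun l _ => hpS l _).ne',
        Real.log_prod (fun l _ => (hpC l (F ∩ C l)).ne'),
        Real.log_prod (fun l _ => (hpS l (F ∩ S l)).ne'),
        mul_sub, Finset.mul_sum, Finset.mul_sum]
    rw [Finset.sum_congr rfl h1, Finset.sum_sub_distrib]
    congr 1
    · rw [Finset.sum_comm]
      exact Finset.sum_congr rfl fun l _ => (hθfun _ _).symm
    · rw [Finset.sum_comm]
      exact Finset.sum_congr rfl fun l _ => (hθfun _ _).symm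
  · intro l hl
    rw [hθfun]
    exact theta_cancel_aux E (C l) hl (fun A => Real.log (pC l A))
  · intro l _ hl
    rw [hθfun]
    exact theta_cancel_aux E (S l) hl (fun A => Real.log (pS l A))
end

section
/- (Hammersley–Clifford for binary log-linear models) Let p_E > 0, E ⊆ V, be a probability vector on the binary table, and θ_F = Σ_{E⊆F} (-1)^{|F\E|} log p_E. The distribution is Markov with respect to an undirected graph G on V if and only if θ_E = 0 for every E ⊆ V that is not a complete subset of G. -/
open Finset
open scoped Classical

private lemma hc_between_sum {V : Type} [DecidableEq V] (E A : Finset V) (hA : A ⊆ E) :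
    ∑ F ∈ E.powerset.filter (fun F => A ⊆ F), (-1 : ℝ) ^ (F \ A).card
      = if A = E then 1 else 0 := by
  have h : ∑ F ∈ E.powerset.filter (fun F => A ⊆ F), (-1 : ℝ) ^ (F \ A).card
      = ∑ B ∈ (E \ A).powerset, (-1 : ℝ) ^ B.card := by
    refine Finset.sum_nbij' (i := fun F => F \ A) (j := fun B => A ∪ B) ?_ ?_ ?_ ?_ ?_
    · intro F hF
      simp only [mem_filter, mem_powerset] at hF
      exact mem_powerset.mpr (sdiff_subset_sdiff hF.1 Subset.rfl)
    · intro B hB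
      simp only [mem_powerset] at hB
      simp only [mem_filter, mem_powerset]
      refine ⟨union_subset hA (hB.trans sdiff_subset), subset_union_left⟩
    · intro F hF
      simp only [mem_filter, mem_powerset] at hF
      exact union_sdiff_of_subset hF.2
    · intro B hB
      simp only [mem_powerset] at hB
      have hdisj : Disjoint A B := Finset.disjoint_sdiff.mono_right hB
      exact union_sdiff_cancel_left hdisj
    · intro F hF; rfl
  rw [h]
  have h2 : ∑ B ∈ (E \ A).powerset, (-1 : ℝ) ^ B.card
      = ((∑ B ∈ (E \ A).powerset, (-1 : ℤ) ^ B.card : ℤ) : ℝ) := by push_cast; rfl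
  rw [h2, Finset.sum_powerset_neg_one_pow_card]
  by_cases hAE : A = E
  · have : E \ A = ∅ := by rw [hAE, sdiff_self]; rfl
    simp [hAE, this]
  · have : E \ A ≠ ∅ := by
      rw [Ne, sdiff_eq_empty_iff_subset]
      exact fun h' => hAE (subset_antisymm hA h')
    simp [hAE, this]

private lemma hc_log_inv {V : Type} [DecidableEq V]
    (p : Finset V → ℝ) (θ : Finset V → ℝ)
    (hθ : ∀ F : Finset V,
      θ F = ∑ E ∈ F.powerset, (-1 : ℝ) ^ ((F \ E).card) * Real.log (p E))
    (E : Finset V) :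
    ∑ F ∈ E.powerset, θ F = Real.log (p E) := by
  calc ∑ F ∈ E.powerset, θ F
      = ∑ F ∈ E.powerset, ∑ A ∈ F.powerset,
          (-1 : ℝ) ^ ((F \ A).card) * Real.log (p A) :=
        Finset.sum_congr rfl fun F _ => hθ F
    _ = ∑ A ∈ E.powerset, ∑ F ∈ E.powerset.filter (fun F => A ⊆ F),
          (-1 : ℝ) ^ ((F \ A).card) * Real.log (p A) := by
        refine Finset.sum_comm' ?_
        intro F A
        simp only [mem_powerset, mem_filter]
        constructor
        · rintro ⟨h1, h2⟩; exact ⟨⟨h1, h2⟩, h2.trans h1⟩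
        · rintro ⟨⟨h1, h2⟩, _⟩; exact ⟨h1, h2⟩
    _ = ∑ A ∈ E.powerset, (if A = E then 1 else 0) * Real.log (p A) := by
        refine Finset.sum_congr rfl fun A hA => ?_
        rw [← Finset.sum_mul, hc_between_sum E A (mem_powerset.mp hA)]
    _ = Real.log (p E) := by
        rw [Finset.sum_congr rfl (fun A _ => ite_mul (A = E) 1 0 (Real.log (p A)))]
        simp only [one_mul, zero_mul]
        rw [Finset.sum_ite_eq' E.powerset E (fun A => Real.log (p A))]
        simp

private lemma hc_cancel_sum {V : Type} [DecidableEq V] (E : Finset V) (w : V)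
    (hw : w ∈ E) (g : Finset V → ℝ) (hg : ∀ A, g (insert w A) = g A) :
    ∑ A ∈ E.powerset, (-1 : ℝ) ^ ((E \ A).card) * g A = 0 := by
  have key : ∀ s : Finset V, w ∉ s →
      ∑ A ∈ (insert w s).powerset, (-1 : ℝ) ^ ((insert w s \ A).card) * g A = 0 := by
    intro s hs
    rw [Finset.sum_powerset_insert hs, ← Finset.sum_add_distrib]
    refine Finset.sum_eq_zero fun A hA => ?_
    have hAs : A ⊆ s := mem_powerset.mp hA
    have hwA : w ∉ A := fun h => hs (hAs h)
    have h1 : insert w s \ A = insert w (s \ A) := by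
      rw [insert_sdiff_of_notMem _ hwA]
    have h2 : insert w s \ insert w A = s \ A := by
      ext x
      simp only [mem_sdiff, mem_insert, not_or]
      constructor
      · rintro ⟨hx1 | hx1, hx2, hx3⟩
        · exact absurd hx1 hx2
        · exact ⟨hx1, hx3⟩
      · rintro ⟨hx1, hx2⟩
        exact ⟨Or.inr hx1, fun h => hs (h ▸ hx1), hx2⟩
    have hwsA : w ∉ s \ A := fun h => hs (mem_sdiff.mp h).1
    rw [h1, h2, card_insert_of_notMem hwsA, hg A, pow_succ]
    ring
  have := key (E.erase w) (notMem_erase w E)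
  rwa [insert_erase hw] at this

/-- Hammersley–Clifford for binary log-linear models: a positive binary
distribution factorizes over the cliques of `G` (is Markov with respect to `G`)
iff the log-linear parameters `θ_E` vanish for every `E` which is not complete
in `G`. -/
theorem hammersley_clifford_binary
    (V : Type) [Fintype V] [DecidableEq V] (G : SimpleGraph V)
    (p : Finset V → ℝ) (hp : ∀ E, 0 < p E)
    (hsum : ∑ E ∈ (Finset.univ : Finset V).powerset, p E = 1)
    (θ : Finset V → ℝ)
    (hθ : ∀ F : Finset V,
      θ F = ∑ E ∈ F.powerset, (-1 : ℝ) ^ ((F \ E).card) * Real.log (p E)) :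
    (∃ ψ : Finset V → Finset V → ℝ, (∀ D A, 0 < ψ D A) ∧
        ∀ E : Finset V,
          p E = ∏ D ∈ (Finset.univ : Finset V).powerset.filter
              (fun D : Finset V => G.IsClique (↑D : Set V)), ψ D (E ∩ D)) ↔
    (∀ E : Finset V, ¬ G.IsClique (↑E : Set V) → θ E = 0) := by
  constructor
  · rintro ⟨ψ, hψpos, hψ⟩ E hE
    rw [SimpleGraph.isClique_iff, Set.Pairwise] at hE
    push_neg at hE
    obtain ⟨u, hu, v, hv, huv, hadj⟩ := hE
    rw [Finset.mem_coe] at hu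
    rw [Finset.mem_coe] at hv
    rw [hθ E]
    have step : ∀ A ∈ E.powerset, (-1 : ℝ) ^ ((E \ A).card) * Real.log (p A)
        = ∑ D ∈ (Finset.univ : Finset V).powerset.filter
            (fun D : Finset V => G.IsClique (↑D : Set V)),
          (-1 : ℝ) ^ ((E \ A).card) * Real.log (ψ D (A ∩ D)) := by
      intro A _
      rw [hψ A, Real.log_prod (fun D _ => (hψpos D _).ne'), Finset.mul_sum]
    rw [Finset.sum_congr rfl step, Finset.sum_comm]
    refine Finset.sum_eq_zero fun D hD => ?_
    have hclD : G.IsClique (↑D : Set V) := (mem_filter.mp hD).2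
    have hex : ∃ w, w ∈ E ∧ w ∉ D := by
      by_cases hu' : u ∈ D
      · exact ⟨v, hv, fun hv' => hadj (hclD hu' hv' huv)⟩
      · exact ⟨u, hu, hu'⟩
    obtain ⟨w, hwE, hwD⟩ := hex
    exact hc_cancel_sum E w hwE (fun A => Real.log (ψ D (A ∩ D)))
      (fun A => by simp only [insert_inter_of_notMem hwD])
  · intro h
    refine ⟨fun D A => if A = D then Real.exp (θ D) else 1, ?_, ?_⟩
    · intro D A
      by_cases hAD : A = D <;> simp [hAD, Real.exp_pos]
    · intro E
      have h1 : ∏ D ∈ (Finset.univ : Finset V).powerset.filter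
            (fun D : Finset V => G.IsClique (↑D : Set V)),
          (if E ∩ D = D then Real.exp (θ D) else 1)
          = ∏ D ∈ (Finset.univ : Finset V).powerset.filter
            (fun D : Finset V => G.IsClique (↑D : Set V)),
          (if D ⊆ E then Real.exp (θ D) else 1) := by
        refine Finset.prod_congr rfl fun D _ => ?_
        by_cases hDE : D ⊆ E
        · rw [if_pos (inter_eq_right.mpr hDE), if_pos hDE]
        · rw [if_neg (fun hc => hDE (inter_eq_right.mp hc)), if_neg hDE]
      rw [h1, ← Finset.prod_filter, ← Real.exp_sum]
      have h2 : ∑ D ∈ ((Finset.univ : Finset V).powerset.filter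
            (fun D : Finset V => G.IsClique (↑D : Set V))).filter (fun D => D ⊆ E),
          θ D = ∑ D ∈ E.powerset, θ D := by
        refine Finset.sum_subset ?_ ?_
        · intro D hD
          simp only [mem_filter, mem_powerset] at hD ⊢
          exact hD.2
        · intro D hD hD'
          simp only [mem_filter, mem_powerset] at hD hD'
          refine h D fun hc => hD' ⟨⟨subset_univ D, hc⟩, hD⟩
      rw [h2, hc_log_inv p θ hθ E, Real.exp_log (hp E)]
end

section
/- Let A be the |𝒟|×|𝒟| matrix with entries A_{C,D} = 1_{C⊆D} − q_C, where 1_{C⊆D} indicates C ⊆ D and q_C = Σ_{F∈ℰ, F⊇C} p_F for some numbers (p_F)_{F∈ℰ}, ℰ the nonempty subsets of V and 𝒟 ⊆ ℰ closed under nonempty subsets. Then det A = 1 − Σ_{H∈ℰ} p_H · (Σ_{D⊆H, D∈𝒟} Σ_{C⊆D, C∈𝒟} (-1)^{|D\C|}). -/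
open Finset Matrix

lemma mob_aux {α : Type*} [DecidableEq α] (C E : Finset α) (hCE : C ⊆ E) :
    ∑ D ∈ E.powerset.filter (fun D => C ⊆ D), (-1 : ℝ) ^ ((E \ D).card)
      = if C = E then 1 else 0 := by
  have h1 : ∑ D ∈ E.powerset.filter (fun D => C ⊆ D), (-1 : ℝ) ^ ((E \ D).card)
      = ∑ T ∈ (E \ C).powerset, (-1 : ℝ) ^ T.card := by
    refine Finset.sum_nbij' (i := fun D => E \ D) (j := fun T => E \ T)
      ?_ ?_ ?_ ?_ ?_
    · intro D hD
      simp only [Finset.mem_filter, Finset.mem_powerset] at hD ⊢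
      exact Finset.sdiff_subset_sdiff le_rfl hD.2
    · intro T hT
      simp only [Finset.mem_powerset] at hT
      simp only [Finset.mem_filter, Finset.mem_powerset]
      refine ⟨Finset.sdiff_subset, ?_⟩
      rw [Finset.subset_sdiff]
      exact ⟨hCE, (Finset.disjoint_of_subset_left hT Finset.sdiff_disjoint).symm⟩
    · intro D hD
      simp only [Finset.mem_filter, Finset.mem_powerset] at hD
      exact Finset.sdiff_sdiff_eq_self hD.1
    · intro T hT
      simp only [Finset.mem_powerset] at hT
      exact Finset.sdiff_sdiff_eq_self (hT.trans Finset.sdiff_subset)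
    · intro D _; rfl
  rw [h1]
  have h2 : ((∑ m ∈ (E \ C).powerset, (-1 : ℤ) ^ m.card : ℤ) : ℝ)
      = ((if (E \ C) = ∅ then 1 else 0 : ℤ) : ℝ) := by
    exact congrArg _ (Finset.sum_powerset_neg_one_pow_card (x := E \ C))
  push_cast [apply_ite (fun z : ℤ => (z : ℝ))] at h2
  rw [h2]
  by_cases h : C = E
  · subst h; simp
  · rw [if_neg, if_neg h]
    rw [Finset.sdiff_eq_empty_iff_subset]
    exact fun hEC => h (Finset.Subset.antisymm hCE hEC)

/-- Determinant of the Jacobian-type matrix `A_{C,D} = 1_{C⊆D} − q_C` with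
`q_C = ∑_{F∈ℰ, F⊇C} p_F`, for a generating class `𝒟` closed under nonempty
subsets: `det A = 1 − ∑_{H∈ℰ} p_H ∑_{D∈𝒟, D⊆H} ∑_{C∈𝒟, C⊆D} (-1)^{|D\C|}`. -/
theorem det_jacobian_matrix
    (V : Type) [Fintype V] [DecidableEq V]
    (𝒟 : Finset (Finset V))
    (hne : ∅ ∉ 𝒟)
    (hclosed : ∀ D ∈ 𝒟, ∀ C ⊆ D, C.Nonempty → C ∈ 𝒟)
    (p : Finset V → ℝ)
    (q : Finset V → ℝ)
    (hq : ∀ C : Finset V, q C =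
      ∑ F ∈ (Finset.univ : Finset V).powerset.filter (fun F => F.Nonempty ∧ C ⊆ F), p F)
    (A : Matrix {D // D ∈ 𝒟} {D // D ∈ 𝒟} ℝ)
    (hA : ∀ C D : {D // D ∈ 𝒟},
      A C D = (if (C : Finset V) ⊆ (D : Finset V) then (1 : ℝ) else 0) - q C) :
    A.det = 1 - ∑ H ∈ (Finset.univ : Finset V).powerset.filter (fun H => H.Nonempty),
      p H * ∑ D ∈ 𝒟.filter (fun D => D ⊆ H),
        ∑ C ∈ 𝒟.filter (fun C => C ⊆ D), (-1 : ℝ) ^ ((D \ C).card) := by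
  classical
  have hDne : ∀ D : {D // D ∈ 𝒟}, (D : Finset V).Nonempty := fun D =>
    Finset.nonempty_iff_ne_empty.2 (fun h => hne (h ▸ D.2))
  set Z : Matrix {D // D ∈ 𝒟} {D // D ∈ 𝒟} ℝ := fun C D => if (C : Finset V) ⊆ (D : Finset V) then 1 else 0 with hZ
  set W : Matrix {D // D ∈ 𝒟} {D // D ∈ 𝒟} ℝ := fun C D =>
    if (C : Finset V) ⊆ (D : Finset V)
      then (-1 : ℝ) ^ (((D : Finset V) \ (C : Finset V)).card) else 0 with hW
  -- Z * W = 1 (Möbius inversion)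
  have hZW : Z * W = 1 := by
    ext C E
    rw [Matrix.mul_apply, Matrix.one_apply]
    have hsum : ∑ D : {D // D ∈ 𝒟}, Z C D * W D E
        = ∑ D ∈ 𝒟, (if (C : Finset V) ⊆ D ∧ D ⊆ (E : Finset V)
            then (-1 : ℝ) ^ (((E : Finset V) \ D).card) else 0) := by
      rw [← Finset.sum_coe_sort 𝒟
        (fun D => if (C : Finset V) ⊆ D ∧ D ⊆ (E : Finset V)
            then (-1 : ℝ) ^ (((E : Finset V) \ D).card) else 0)]
      refine Finset.sum_congr rfl fun D _ => ?_
      simp only [hZ, hW]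
      by_cases h1 : (C : Finset V) ⊆ (D : Finset V) <;>
        by_cases h2 : (D : Finset V) ⊆ (E : Finset V) <;>
        simp [h1, h2]
    rw [hsum]
    by_cases hce : (C : Finset V) ⊆ (E : Finset V)
    · have hfil : 𝒟.filter (fun D => (C : Finset V) ⊆ D ∧ D ⊆ (E : Finset V))
          = (E : Finset V).powerset.filter (fun D => (C : Finset V) ⊆ D) := by
        ext D
        simp only [Finset.mem_filter, Finset.mem_powerset]
        constructor
        · rintro ⟨_, h1, h2⟩; exact ⟨h2, h1⟩
        · rintro ⟨h2, h1⟩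
          exact ⟨hclosed _ E.2 _ h2 ((hDne C).mono h1), h1, h2⟩
      rw [Finset.sum_ite, Finset.sum_const_zero, add_zero, hfil,
        mob_aux _ _ hce]
      by_cases h : C = E
      · simp [h]
      · have : (C : Finset V) ≠ (E : Finset V) := fun hh => h (Subtype.ext hh)
        simp [h, this]
    · have : ∀ D ∈ 𝒟, (if (C : Finset V) ⊆ D ∧ D ⊆ (E : Finset V)
          then (-1 : ℝ) ^ (((E : Finset V) \ D).card) else 0) = 0 := by
        intro D _
        rw [if_neg]
        rintro ⟨h1, h2⟩
        exact hce (h1.trans h2)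
      rw [Finset.sum_congr rfl this, Finset.sum_const_zero]
      have : C ≠ E := fun h => hce (h ▸ le_rfl)
      simp [this]
  -- decompose A
  set u : {D // D ∈ 𝒟} → ℝ := W *ᵥ (fun D => -q (D : Finset V)) with hu
  have hAdec : A = Z * (1 + Matrix.replicateCol Unit u * Matrix.replicateRow Unit (fun _ => (1 : ℝ))) := by
    rw [Matrix.mul_add, Matrix.mul_one, ← Matrix.mul_assoc, ← Matrix.replicateCol_mulVec,
      hu, Matrix.mulVec_mulVec, hZW]
    ext C D
    rw [hA]
    rw [Matrix.add_apply, Matrix.mul_apply]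
    simp [Matrix.add_apply, hZ, Matrix.mul_apply, Matrix.replicateCol, Matrix.replicateRow,
      Matrix.one_mulVec, sub_eq_add_neg, Pi.add_apply, Matrix.of_apply]
  -- det Z = 1
  have hZdet : Z.det = 1 := by
    have hbt : Z.BlockTriangular (fun D : {D // D ∈ 𝒟} => (D : Finset V).card) := by
      intro i j hij
      simp only [hZ]
      rw [if_neg]
      intro hsub
      exact absurd (Finset.card_le_card hsub) (not_le.2 hij)
    rw [hbt.det]
    refine Finset.prod_eq_one fun k _ => ?_
    have : Z.toSquareBlock (fun D : {D // D ∈ 𝒟} => (D : Finset V).card) k = 1 := by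
      ext i j
      rw [Matrix.toSquareBlock_def, Matrix.of_apply]
      simp only [Matrix.toSquareBlock_def, hZ, Matrix.one_apply]
      by_cases hij : i = j
      · simp [hij]
      · have hne' : (i.1 : Finset V) ≠ (j.1 : Finset V) := by
          intro hh
          exact hij (Subtype.ext (Subtype.ext hh))
        have : ¬ (i.1 : Finset V) ⊆ (j.1 : Finset V) := by
          intro hsub
          exact hne' (Finset.eq_of_subset_of_card_le hsub
            (le_of_eq (j.2.trans i.2.symm)))
        simp [hij, this]
    rw [this, Matrix.det_one]
  -- determinant formula
  have hdet : A.det = 1 + (fun _ : {D // D ∈ 𝒟} => (1 : ℝ)) ⬝ᵥ u := by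
    rw [hAdec, Matrix.det_mul, hZdet, one_mul,
      Matrix.det_one_add_replicateCol_mul_replicateRow]
  rw [hdet]
  -- now compute the dot product
  have hdot : (fun _ : {D // D ∈ 𝒟} => (1 : ℝ)) ⬝ᵥ u
      = - ∑ D ∈ 𝒟, q D * ∑ C ∈ 𝒟.filter (fun C => C ⊆ D),
          (-1 : ℝ) ^ ((D \ C).card) := by
    show ∑ C : {D // D ∈ 𝒟}, 1 * u C = _
    simp only [one_mul, hu, Matrix.mulVec, dotProduct, hW]
    rw [Finset.sum_comm]
    rw [← Finset.sum_coe_sort 𝒟 (fun D => q D * ∑ C ∈ 𝒟.filter (fun C => C ⊆ D),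
          (-1 : ℝ) ^ ((D \ C).card)), ← Finset.sum_neg_distrib]
    refine Finset.sum_congr rfl fun D _ => ?_
    have hin : ∑ C ∈ 𝒟.filter (fun C => C ⊆ (D : Finset V)),
        (-1 : ℝ) ^ (((D : Finset V) \ C).card)
        = ∑ C : {D // D ∈ 𝒟}, (if (C : Finset V) ⊆ (D : Finset V)
            then (-1 : ℝ) ^ (((D : Finset V) \ (C : Finset V)).card) else 0) := by
      rw [Finset.sum_filter,
        Finset.sum_coe_sort 𝒟 (fun C => if C ⊆ (D : Finset V)
          then (-1 : ℝ) ^ (((D : Finset V) \ C).card) else 0)]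
    rw [hin, ← Finset.sum_mul]
    ring
  rw [hdot]
  -- exchange the order of summation
  have hs : ∑ D ∈ 𝒟, q D * ∑ C ∈ 𝒟.filter (fun C => C ⊆ D),
        (-1 : ℝ) ^ ((D \ C).card)
      = ∑ H ∈ (Finset.univ : Finset V).powerset.filter (fun H => H.Nonempty),
          p H * ∑ D ∈ 𝒟.filter (fun D => D ⊆ H),
            ∑ C ∈ 𝒟.filter (fun C => C ⊆ D), (-1 : ℝ) ^ ((D \ C).card) := by
    calc ∑ D ∈ 𝒟, q D * ∑ C ∈ 𝒟.filter (fun C => C ⊆ D),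
            (-1 : ℝ) ^ ((D \ C).card)
        = ∑ D ∈ 𝒟, ∑ H ∈ (Finset.univ : Finset V).powerset.filter (fun H => H.Nonempty),
            (if D ⊆ H then p H * ∑ C ∈ 𝒟.filter (fun C => C ⊆ D),
              (-1 : ℝ) ^ ((D \ C).card) else 0) := by
          refine Finset.sum_congr rfl fun D _ => ?_
          rw [hq, Finset.sum_mul]
          have hfil : (Finset.univ : Finset V).powerset.filter
                (fun F => F.Nonempty ∧ D ⊆ F)
              = ((Finset.univ : Finset V).powerset.filter
                  (fun F => F.Nonempty)).filter (fun F => D ⊆ F) := by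
            rw [Finset.filter_filter]
          rw [hfil, Finset.sum_filter]
      _ = ∑ H ∈ (Finset.univ : Finset V).powerset.filter (fun H => H.Nonempty),
            ∑ D ∈ 𝒟, (if D ⊆ H then p H * ∑ C ∈ 𝒟.filter (fun C => C ⊆ D),
              (-1 : ℝ) ^ ((D \ C).card) else 0) := Finset.sum_comm
      _ = ∑ H ∈ (Finset.univ : Finset V).powerset.filter (fun H => H.Nonempty),
            p H * ∑ D ∈ 𝒟.filter (fun D => D ⊆ H),
              ∑ C ∈ 𝒟.filter (fun C => C ⊆ D), (-1 : ℝ) ^ ((D \ C).card) := by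
          refine Finset.sum_congr rfl fun H _ => ?_
          rw [← Finset.sum_filter, Finset.mul_sum]
  rw [hs]
  ring
end
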